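/- arXiv:2310.08081 — 6 statements merged into one kernel-verified Lean document; each statement's English description precedes it below -/
import Mathlib

section
/- For any integers m ≥ a ≥ 1 and n ≥ b ≥ 1, the maximum number Z(m,n,a,b) of edges in a bipartite graph with parts of sizes m and n containing no complete bipartite subgraph K_{a,b} (with the a vertices in the first part and the b vertices in the second part) satisfies Z(m,n,a,b) ≤ (b-1)^{1/a} · m · n^{1-1/a} + (a-1)·n. -/
open Finset


/-- Kővári–Sós–Turán / Zarankiewicz bound: any bipartite graph with parts of sizes `m` and `n`
containing no `K_{a,b}` (with the `a` vertices in the first part) has at most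
`(b-1)^(1/a) * m * n^(1-1/a) + (a-1) * n` edges. -/
theorem stmt_0 (m n a b : ℕ) (ha : 1 ≤ a) (hb : 1 ≤ b) (ham : a ≤ m) (hbn : b ≤ n)
    (E : Fin m → Fin n → Prop)
    (hfree : ¬ ∃ (S : Finset (Fin m)) (T : Finset (Fin n)),
      S.card = a ∧ T.card = b ∧ ∀ i ∈ S, ∀ j ∈ T, E i j) :
    (Set.ncard {p : Fin m × Fin n | E p.1 p.2} : ℝ) ≤
      ((b : ℝ) - 1) ^ ((1 : ℝ) / a) * m * (n : ℝ) ^ (1 - (1 : ℝ) / a)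
        + ((a : ℝ) - 1) * n := by
  classical
  set N : Fin n → Finset (Fin m) := fun j => univ.filter (fun i => E i j) with hN
  set d : Fin n → ℕ := fun j => (N j).card with hd
  -- edge count equals sum of degrees
  have hcard : Set.ncard {p : Fin m × Fin n | E p.1 p.2} = ∑ j, d j := by
    have h1 : {p : Fin m × Fin n | E p.1 p.2}
        = ↑(univ.filter fun p : Fin m × Fin n => E p.1 p.2) := by
      ext p; simp
    rw [h1, Set.ncard_coe_finset]
    rw [Finset.card_eq_sum_card_fiberwise (f := Prod.snd) (t := univ)
      (fun p _ => mem_univ _)]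
    refine Finset.sum_congr rfl fun j _ => ?_
    refine Finset.card_bij' (fun p _ => p.1) (fun i _ => (i, j)) ?_ ?_ ?_ ?_
    · intro p hp
      simp only [mem_filter, mem_univ, true_and] at hp ⊢
      simp [hN]
      rcases hp with ⟨h1, h2⟩
      rwa [h2] at h1
    · intro i hi
      simp only [hN, mem_filter, mem_univ, true_and] at hi
      simp [hi]
    · intro p hp
      simp only [mem_filter, mem_univ, true_and] at hp
      exact Prod.ext rfl hp.2.symm
    · intro i hi; rfl
  -- each a-subset has few common neighbors
  have hA : ∀ A : Finset (Fin m), A.card = a →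
      (univ.filter fun j => A ⊆ N j).card ≤ b - 1 := by
    intro A hAcard
    by_contra h
    push_neg at h
    have hb' : b ≤ (univ.filter fun j => A ⊆ N j).card := by omega
    obtain ⟨T, hT, hTcard⟩ := Finset.exists_subset_card_eq hb'
    refine hfree ⟨A, T, hAcard, hTcard, fun i hi j hj => ?_⟩
    have hj' := hT hj
    simp only [mem_filter, mem_univ, true_and] at hj'
    have := hj' hi
    simp only [hN, mem_filter, mem_univ, true_and] at this
    exact this
  -- double counting
  have count : ∑ j, (d j).choose a ≤ (b - 1) * m.choose a := by
    have h1 : ∀ j, (d j).choose a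
        = ((univ.powersetCard a).filter fun A => A ⊆ N j).card := by
      intro j
      rw [hd, ← Finset.card_powersetCard]
      congr 1
      ext A
      simp only [Finset.mem_powersetCard, Finset.mem_filter, subset_univ, true_and]
      tauto
    calc ∑ j, (d j).choose a
        = ∑ j, ∑ A ∈ univ.powersetCard a, if A ⊆ N j then 1 else 0 := by
          simp only [h1, Finset.card_filter]
      _ = ∑ A ∈ univ.powersetCard a, (univ.filter fun j => A ⊆ N j).card := by
          rw [Finset.sum_comm]
          simp only [Finset.card_filter]
      _ ≤ ∑ A ∈ univ.powersetCard a, (b - 1) := by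
          refine Finset.sum_le_sum fun A hA' => ?_
          exact hA A (Finset.mem_powersetCard.1 hA').2
      _ = (b - 1) * m.choose a := by
          simp [Finset.card_powersetCard, mul_comm]
  -- pointwise descFactorial bound
  have hpt : ∀ j, (d j - (a - 1)) ^ a ≤ a.factorial * (d j).choose a := by
    intro j
    rw [← Nat.descFactorial_eq_factorial_mul_choose, Nat.descFactorial_eq_prod_range]
    calc (d j - (a - 1)) ^ a = ∏ _i ∈ Finset.range a, (d j - (a - 1)) := by
          rw [Finset.prod_const, Finset.card_range]
      _ ≤ ∏ i ∈ Finset.range a, (d j - i) := by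
          refine Finset.prod_le_prod' fun i hi => ?_
          have : i ≤ a - 1 := by
            have := Finset.mem_range.1 hi; omega
          exact Nat.sub_le_sub_left this _
  have sumpow : ∑ j, (d j - (a - 1)) ^ a ≤ (b - 1) * m ^ a := by
    calc ∑ j, (d j - (a - 1)) ^ a ≤ ∑ j, a.factorial * (d j).choose a :=
          Finset.sum_le_sum fun j _ => hpt j
      _ = a.factorial * ∑ j, (d j).choose a := (Finset.mul_sum _ _ _).symm
      _ ≤ a.factorial * ((b - 1) * m.choose a) := Nat.mul_le_mul_left _ count
      _ = (b - 1) * (a.factorial * m.choose a) := by ring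
      _ ≤ (b - 1) * m ^ a := by
          refine Nat.mul_le_mul_left _ ?_
          rw [← Nat.descFactorial_eq_factorial_mul_choose]
          exact Nat.descFactorial_le_pow _ _
  set S : ℕ := ∑ j, (d j - (a - 1)) with hS
  have hE : ∑ j, d j ≤ S + (a - 1) * n := by
    calc ∑ j, d j ≤ ∑ j, ((d j - (a - 1)) + (a - 1)) :=
          Finset.sum_le_sum fun j _ => by omega
      _ = S + (a - 1) * n := by
          rw [Finset.sum_add_distrib, Finset.sum_const, Finset.card_univ,
            Fintype.card_fin, smul_eq_mul, mul_comm]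
  -- real part
  have hn0 : (0 : ℝ) < n := by exact_mod_cast (by omega : 0 < n)
  have ha0 : (0 : ℝ) < a := by exact_mod_cast ha
  have haR : ((a - 1 : ℕ) : ℝ) = (a : ℝ) - 1 := by
    rw [Nat.cast_sub ha, Nat.cast_one]
  have hbR : ((b - 1 : ℕ) : ℝ) = (b : ℝ) - 1 := by
    rw [Nat.cast_sub hb, Nat.cast_one]
  have hb0 : (0 : ℝ) ≤ (b : ℝ) - 1 := by
    rw [← hbR]; positivity
  set y : Fin n → ℝ := fun j => ((d j - (a - 1) : ℕ) : ℝ) with hy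
  -- power mean inequality
  have hpm : ((S : ℝ)) ^ a ≤ (n : ℝ) ^ (a - 1) * ∑ j, (y j) ^ a := by
    have h := pow_sum_div_card_le_sum_pow (s := (univ : Finset (Fin n)))
      (f := y) (fun i _ => by positivity) (a - 1)
    rw [(by omega : a - 1 + 1 = a)] at h
    have hsum : ∑ j, y j = (S : ℝ) := by
      rw [hS, Nat.cast_sum]
    rw [hsum, Finset.card_univ, Fintype.card_fin] at h
    calc ((S : ℝ)) ^ a = ((S : ℝ)) ^ a / (n : ℝ) ^ (a - 1) * (n : ℝ) ^ (a - 1) := by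
          field_simp
      _ ≤ (∑ j, (y j) ^ a) * (n : ℝ) ^ (a - 1) := by
          refine mul_le_mul_of_nonneg_right ?_ (by positivity)
          exact_mod_cast h
      _ = (n : ℝ) ^ (a - 1) * ∑ j, (y j) ^ a := mul_comm _ _
  have hsp : ∑ j, (y j) ^ a ≤ ((b : ℝ) - 1) * (m : ℝ) ^ a := by
    calc ∑ j, (y j) ^ a = ((∑ j, (d j - (a - 1)) ^ a : ℕ) : ℝ) := by
          push_cast [hy]; ring
      _ ≤ (((b - 1) * m ^ a : ℕ) : ℝ) := by exact_mod_cast sumpow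
      _ = ((b : ℝ) - 1) * (m : ℝ) ^ a := by rw [Nat.cast_mul, hbR, Nat.cast_pow]
  have hxa : ((S : ℝ)) ^ a ≤ ((b : ℝ) - 1) * (m : ℝ) ^ a * (n : ℝ) ^ (a - 1) := by
    calc ((S : ℝ)) ^ a ≤ (n : ℝ) ^ (a - 1) * ∑ j, (y j) ^ a := hpm
      _ ≤ (n : ℝ) ^ (a - 1) * (((b : ℝ) - 1) * (m : ℝ) ^ a) :=
          mul_le_mul_of_nonneg_left hsp (by positivity)
      _ = ((b : ℝ) - 1) * (m : ℝ) ^ a * (n : ℝ) ^ (a - 1) := by ring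
  have hane : (a : ℝ) ≠ 0 := ne_of_gt ha0
  have hkey : (S : ℝ) ≤ ((b : ℝ) - 1) ^ ((1 : ℝ) / a) * m * (n : ℝ) ^ (1 - (1 : ℝ) / a) := by
    have hS0 : (0 : ℝ) ≤ (S : ℝ) := Nat.cast_nonneg _
    have h1 : (S : ℝ) = (((S : ℝ)) ^ a) ^ ((1 : ℝ) / a) := by
      rw [← Real.rpow_natCast (S : ℝ) a, ← Real.rpow_mul hS0,
        mul_one_div_cancel hane, Real.rpow_one]
    rw [h1]
    have h2 : (((S : ℝ)) ^ a) ^ ((1 : ℝ) / a)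
        ≤ (((b : ℝ) - 1) * (m : ℝ) ^ a * (n : ℝ) ^ (a - 1)) ^ ((1 : ℝ) / a) :=
      Real.rpow_le_rpow (by positivity) hxa (by positivity)
    refine h2.trans_eq ?_
    rw [Real.mul_rpow (by positivity) (by positivity),
      Real.mul_rpow hb0 (by positivity)]
    congr 1
    · congr 1
      rw [← Real.rpow_natCast (m : ℝ) a, ← Real.rpow_mul (Nat.cast_nonneg m),
        mul_one_div_cancel hane, Real.rpow_one]
    · rw [← Real.rpow_natCast (n : ℝ) (a - 1), ← Real.rpow_mul (Nat.cast_nonneg n)]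
      congr 1
      rw [haR, sub_mul, one_mul, mul_one_div_cancel hane]
  -- conclude
  rw [hcard]
  calc ((∑ j, d j : ℕ) : ℝ) ≤ ((S + (a - 1) * n : ℕ) : ℝ) := by exact_mod_cast hE
    _ = (S : ℝ) + ((a : ℝ) - 1) * n := by rw [Nat.cast_add, Nat.cast_mul, haR]
    _ ≤ ((b : ℝ) - 1) ^ ((1 : ℝ) / a) * m * (n : ℝ) ^ (1 - (1 : ℝ) / a)
        + ((a : ℝ) - 1) * n := add_le_add_left hkey _
end

section
/- Let r ≥ 2 be a fixed integer. For all sufficiently large n, if s < n and n₁ + ... + n_r = n are positive integers with Σ_{1≤i<j≤r} n_i·n_j ≥ t_r(n) - s, then ⌊n/r⌋ - s ≤ n_i ≤ ⌈n/r⌉ + s for every i ∈ [r]. -/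
open SimpleGraph

lemma count_mod (r : ℕ) (hr : 0 < r) (i : ℕ) (hi : i < r) (n : ℕ) :
    ((Finset.range n).filter (fun v => v % r = i)).card
      = n / r + if i < n % r then 1 else 0 := by
  induction n with
  | zero => simp
  | succ n ih =>
    rw [Finset.range_add_one, Finset.filter_insert]
    have hm : n % r < r := Nat.mod_lt _ hr
    have hdiv : (n + 1) / r = n / r + if r ∣ n + 1 then 1 else 0 := Nat.succ_div
    have hmodsucc : (n + 1) % r = (n % r + 1) % r := (Nat.mod_add_mod n r 1).symm
    by_cases hd : r ∣ n + 1
    · have hmod0 : (n + 1) % r = 0 := Nat.mod_eq_zero_of_dvd hd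
      have hnr : n % r = r - 1 := by
        rw [hmod0] at hmodsucc
        rcases Nat.lt_or_ge (n % r + 1) r with h | h
        · rw [Nat.mod_eq_of_lt h] at hmodsucc; omega
        · omega
      rw [hdiv, if_pos hd, hmod0]
      by_cases hie : n % r = i
      · rw [if_pos hie, Finset.card_insert_of_notMem (by simp), ih]
        split_ifs <;> omega
      · rw [if_neg hie, ih]
        split_ifs <;> omega
    · have hrr : 1 < r := by
        rcases Nat.lt_or_ge 1 r with h | h
        · exact h
        · exfalso; exact hd (by interval_cases r <;> omega)
      have hmod : (n + 1) % r = n % r + 1 := by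
        rw [hmodsucc, Nat.mod_eq_of_lt]
        rcases Nat.lt_or_ge (n % r + 1) r with h | h
        · exact h
        · exfalso
          have heq : n % r + 1 = r := by omega
          exact hd ⟨n / r + 1, by
            have h1 := Nat.div_add_mod n r
            rw [Nat.mul_add, Nat.mul_one]; omega⟩
      rw [hdiv, if_neg hd, hmod]
      by_cases hie : n % r = i
      · rw [if_pos hie, Finset.card_insert_of_notMem (by simp), ih]
        split_ifs <;> omega
      · rw [if_neg hie, ih]
        split_ifs <;> omega

lemma fin_filter_card (n : ℕ) (p : ℕ → Prop) [DecidablePred p] :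
    ((Finset.univ : Finset (Fin n)).filter (fun w => p w.val)).card
      = ((Finset.range n).filter p).card := by
  rw [Finset.card_filter, Finset.card_filter]
  exact Fin.sum_univ_eq_sum_range (fun v => if p v then 1 else 0) n

lemma degree_turan (n r : ℕ) (hr : 0 < r) (v : Fin n) :
    (turanGraph n r).degree v + (n / r + if (v : ℕ) % r < n % r then 1 else 0) = n := by
  classical
  have h1 : (turanGraph n r).degree v
      = ((Finset.univ : Finset (Fin n)).filter
          (fun (w : Fin n) => ¬ ((w : ℕ) % r = (v : ℕ) % r))).card := by
    rw [← card_neighborFinset_eq_degree]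
    congr 1
    ext w
    simp [turanGraph, neighborFinset, neighborSet, ne_comm]
    exact Set.mem_toFinset
  have h2 : ((Finset.univ : Finset (Fin n)).filter
        (fun (w : Fin n) => ((w : ℕ) % r = (v : ℕ) % r))).card
      = n / r + if (v : ℕ) % r < n % r then 1 else 0 := by
    rw [fin_filter_card n (fun w => w % r = (v : ℕ) % r)]
    exact count_mod r hr _ (Nat.mod_lt _ hr) n
  rw [h1, ← h2, add_comm, Finset.card_filter_add_card_filter_not]
  simp

lemma turan_card (n r : ℕ) (hr : 0 < r) :
    2 * (turanGraph n r).edgeFinset.card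
      + (r * (n / r)^2 + 2 * (n % r) * (n / r) + n % r) = n^2 := by
  classical
  set q := n / r with hq
  set b := n % r with hb
  set m : ℕ → ℕ := fun i => q + if i < b then 1 else 0 with hm
  have hsum : (∑ v : Fin n, (turanGraph n r).degree v)
      + (∑ v : Fin n, m ((v : ℕ) % r)) = n^2 := by
    rw [← Finset.sum_add_distrib]
    have : ∀ v : Fin n, (turanGraph n r).degree v + m ((v : ℕ) % r) = n :=
      fun v => degree_turan n r hr v
    simp only [this, Finset.sum_const, Finset.card_univ, Fintype.card_fin, smul_eq_mul, sq]
  have hfib : (∑ v : Fin n, m ((v : ℕ) % r)) = ∑ i ∈ Finset.range r, m i * m i := by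
    rw [← Finset.sum_fiberwise_of_maps_to (g := fun v : Fin n => (v : ℕ) % r)
      (t := Finset.range r) (fun v _ => Finset.mem_range.2 (Nat.mod_lt _ hr))]
    refine Finset.sum_congr rfl fun i hi => ?_
    have : ∀ v ∈ (Finset.univ : Finset (Fin n)).filter (fun v : Fin n => (v : ℕ) % r = i),
        m ((v : ℕ) % r) = m i := by
      intro v hv; rw [(Finset.mem_filter.1 hv).2]
    rw [Finset.sum_congr rfl this, Finset.sum_const, smul_eq_mul]
    congr 1
    rw [fin_filter_card n (fun w => w % r = i), count_mod r hr i (Finset.mem_range.1 hi) n]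
  have hsq : (∑ i ∈ Finset.range r, m i * m i) = r * q^2 + 2 * b * q + b := by
    have hbr : b < r := Nat.mod_lt _ hr
    have hsplit : ∀ i ∈ Finset.range r, m i * m i
        = q * q + (if i < b then 2 * q + 1 else 0) := by
      intro i _
      simp only [hm]
      split_ifs <;> ring
    rw [Finset.sum_congr rfl hsplit, Finset.sum_add_distrib, Finset.sum_const,
      Finset.card_range, Finset.sum_ite, Finset.sum_const, Finset.sum_const]
    have h3 : (Finset.range r).filter (fun i => i < b) = Finset.range b := by
      ext i; simp; omega
    rw [h3, Finset.card_range]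
    simp only [smul_eq_mul, smul_zero, add_zero]
    ring
  rw [SimpleGraph.sum_degrees_eq_twice_card_edges] at hsum
  rw [hfib, hsq] at hsum
  exact hsum

lemma pair_sum (r : ℕ) (x : Fin r → ℕ) :
    (∑ i, x i)^2
      = 2 * (∑ p ∈ Finset.univ.filter (fun p : Fin r × Fin r => p.1 < p.2), x p.1 * x p.2)
        + ∑ i, (x i)^2 := by
  classical
  have htot : (∑ i, x i)^2 = ∑ p ∈ (Finset.univ : Finset (Fin r × Fin r)), x p.1 * x p.2 := by
    rw [sq, Finset.sum_mul_sum, ← Finset.univ_product_univ, Finset.sum_product]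
  have h1 := Finset.sum_filter_add_sum_filter_not (Finset.univ : Finset (Fin r × Fin r))
    (fun p => p.1 < p.2) (fun p => x p.1 * x p.2)
  have h2 := Finset.sum_filter_add_sum_filter_not
    ((Finset.univ : Finset (Fin r × Fin r)).filter (fun p => ¬ p.1 < p.2))
    (fun p => p.2 < p.1) (fun p => x p.1 * x p.2)
  have hswap : ∑ p ∈ (Finset.univ.filter (fun p : Fin r × Fin r => ¬ p.1 < p.2)).filter
        (fun p => p.2 < p.1), x p.1 * x p.2
      = ∑ p ∈ Finset.univ.filter (fun p : Fin r × Fin r => p.1 < p.2), x p.1 * x p.2 := by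
    apply Finset.sum_equiv (Equiv.prodComm (Fin r) (Fin r))
    · intro p
      simp only [Finset.mem_filter, Finset.mem_univ, true_and, Equiv.prodComm_apply,
        Prod.fst_swap, Prod.snd_swap]
      constructor
      · rintro ⟨_, h⟩; exact h
      · intro h; exact ⟨not_lt.2 h.le, h⟩
    · intro p _
      simp only [Equiv.prodComm_apply, Prod.fst_swap, Prod.snd_swap]
      ring
  have hdiag : ∑ p ∈ (Finset.univ.filter (fun p : Fin r × Fin r => ¬ p.1 < p.2)).filter
        (fun p => ¬ p.2 < p.1), x p.1 * x p.2 = ∑ i, (x i)^2 := by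
    apply Finset.sum_nbij' (fun p : Fin r × Fin r => p.1) (fun i : Fin r => (i, i))
    · intro p hp
      exact Finset.mem_univ _
    · intro i _
      simp
    · intro p hp
      simp only [Finset.mem_filter, Finset.mem_univ, true_and, not_lt] at hp
      have : p.1 = p.2 := le_antisymm hp.2 hp.1
      simp [Prod.ext_iff, this]
    · intro i _; rfl
    · intro p hp
      simp only [Finset.mem_filter, Finset.mem_univ, true_and, not_lt] at hp
      have : p.1 = p.2 := le_antisymm hp.2 hp.1
      rw [← this, sq]
  rw [htot, ← h1, ← h2, hswap, hdiag]
  ring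

set_option maxHeartbeats 1000000 in
lemma key_ineq (k s b b' q q' v : ℤ) (hk : 1 ≤ k) (hs : 0 ≤ s)
    (hb : 0 ≤ b) (hbk : b ≤ k) (hb' : 0 ≤ b') (hb'k : b' < k)
    (hsum : (k+1)*q + b - v = k*q' + b')
    (hcase : v + s + 1 ≤ q ∨ (q + s + 2 ≤ v ∧ 1 ≤ b) ∨ (q + s + 1 ≤ v ∧ b = 0)) :
    (k+1)*q^2 + 2*b*q + b + 2*s + 1 ≤ v^2 + k*q'^2 + 2*b'*q' + b' := by
  set e : ℤ := q' - q with he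
  set D : ℤ := q - v with hD
  have hke : k * e = b + D - b' := by
    simp only [he, hD]; linear_combination -hsum
  have hid : v^2 + k*q'^2 + 2*b'*q' + b' - ((k+1)*q^2 + 2*b*q + b + 2*s + 1)
      = D^2 + k*e^2 + 2*b'*e + b' - b - 2*s - 1 := by
    have hv : v = q - D := by omega
    have hq' : q' = q + e := by omega
    rw [hv, hq']
    ring_nf
    linear_combination (2*q) * hke
  rw [← sub_nonneg, hid]
  rcases hcase with hA | ⟨hB, hb1⟩ | ⟨hB, hb0⟩
  · -- Case A : D ≥ s + 1
    have hD1 : s + 1 ≤ D := by omega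
    have he0 : 0 ≤ e := by
      by_contra h
      push_neg at h
      have h1 : e ≤ -1 := by omega
      have h2 : k * e ≤ k * (-1) := mul_le_mul_of_nonneg_left h1 (by omega)
      have h3 : k * (-1) = -k := by ring
      omega
    have hDD : (s+1)*(s+1) ≤ D*D := mul_le_mul hD1 hD1 (by omega) (by omega)
    rcases eq_or_lt_of_le he0 with heq | hlt
    · have hb'eq : b' = b + D := by
        have h0 : k * e = 0 := by rw [← heq]; ring
        omega
      have he' : e = 0 := heq.symm
      rw [he', hb'eq]
      nlinarith [hDD]
    · have he1 : 1 ≤ e := hlt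
      have h1 : 0 ≤ k * (e*e - 1) := mul_nonneg (by omega) (by nlinarith)
      have h2 : 0 ≤ b' * e := mul_nonneg hb' he0
      nlinarith [hDD, h1, h2]
  · -- Case B, b ≥ 1 : D ≤ -(s+2)
    have hD1 : D ≤ -(s+2) := by omega
    have he0 : e ≤ 0 := by
      by_contra h
      push_neg at h
      have h1 : 1 ≤ e := by omega
      have h2 : k * 1 ≤ k * e := mul_le_mul_of_nonneg_left h1 (by omega)
      omega
    set f : ℤ := -e with hf
    have hkf : -D = b - b' + k*f := by
      have : k * f = -(k*e) := by rw [hf]; ring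
      omega
    rcases eq_or_lt_of_le he0 with heq | hlt
    · have hb'eq : b + D = b' := by
        have h0 : k * e = 0 := by rw [heq]; ring
        omega
      have he' : e = 0 := heq
      rw [he']
      have hDD : (s+2)*(s+1) ≤ (-D)*(-D-1) :=
        mul_le_mul (by omega) (by omega) (by omega) (by omega)
      nlinarith [hDD]
    · have hf1 : 1 ≤ f := by omega
      have hDpos : 0 ≤ -D := by omega
      have hD2 : (s+2) * (-D) ≤ (-D) * (-D) := mul_le_mul_of_nonneg_right (by omega) hDpos
      have hprod : (s+2) * (-D) = (s+2) * (b - b' + k*f) := by rw [hkf]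
      have h3 : 0 ≤ k * (s*(f-1) + f*f - 1) := by
        apply mul_nonneg (by omega)
        have h31 := mul_nonneg hs (by omega : (0:ℤ) ≤ f - 1)
        nlinarith
      have h4 : 0 ≤ (k-1-b') * (s+1+2*f) :=
        mul_nonneg (by omega) (by linarith)
      have h5 : (s+1) * 1 ≤ (s+1) * b := mul_le_mul_of_nonneg_left hb1 (by omega)
      have hee : e = -f := by omega
      rw [hee]
      have hDsq : (-D) * (-D) = D^2 := by ring
      linarith [hD2, hprod, h3, h4, h5, hf1, hDsq]
  · -- Case B, b = 0 : D ≤ -(s+1)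
    have hD1 : D ≤ -(s+1) := by omega
    have he0 : e ≤ -1 := by
      by_contra h
      push_neg at h
      have h1 : 0 ≤ e := by omega
      have h2 : 0 ≤ k * e := mul_nonneg (by omega) h1
      omega
    set f : ℤ := -e with hf
    have hf1 : 1 ≤ f := by omega
    have hDD : (s+1)*(s+1) ≤ (-D)*(-D) :=
      mul_le_mul (by omega) (by omega) (by omega) (by omega)
    have h1 : 0 ≤ (k-1-b') * (2*f-1) := mul_nonneg (by omega) (by omega)
    have h2 : 0 ≤ k * ((f-1)*(f-1)) := mul_nonneg (by omega) (mul_self_nonneg _)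
    have hee : e = -f := by omega
    rw [hee, hb0]
    nlinarith [hDD, h1, h2]

lemma min_sq {ι : Type*} (s : Finset ι) (y : ι → ℤ) (k q' b' : ℤ) (hk : (s.card : ℤ) = k)
    (hM : ∑ j ∈ s, y j = k * q' + b') :
    k*q'^2 + 2*b'*q' + b' ≤ ∑ j ∈ s, (y j)^2 := by
  have h0 : ∀ t : ℤ, 0 ≤ t^2 - t := by
    intro t; rcases le_or_gt t 0 with h | h
    · nlinarith
    · nlinarith
  have h1 : 0 ≤ ∑ j ∈ s, ((y j - q')^2 - (y j - q')) := Finset.sum_nonneg fun j _ => h0 _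
  have hcong : ∀ j ∈ s, (y j - q')^2 - (y j - q')
      = (y j)^2 - (2*q'+1) * y j + (q'^2 + q') := fun j _ => by ring
  rw [Finset.sum_congr rfl hcong] at h1
  rw [Finset.sum_add_distrib, Finset.sum_sub_distrib, ← Finset.mul_sum, Finset.sum_const,
    nsmul_eq_mul, hM, hk] at h1
  nlinarith [h1]

/-- If `n₁ + ⋯ + n_r = n` and `Σ_{i<j} n_i n_j ≥ t_r(n) - s` with `s < n`, then every part size
`n_i` satisfies `⌊n/r⌋ - s ≤ n_i ≤ ⌈n/r⌉ + s` (for `n` sufficiently large). -/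
theorem stmt_5 (r : ℕ) (hr : 2 ≤ r) :
    ∃ N : ℕ, ∀ n, N ≤ n → ∀ s : ℕ, s < n → ∀ x : Fin r → ℕ,
      (∀ i, 1 ≤ x i) → (∑ i, x i) = n →
      (turanGraph n r).edgeFinset.card ≤
        (∑ p ∈ Finset.univ.filter (fun p : Fin r × Fin r => p.1 < p.2), x p.1 * x p.2) + s →
      ∀ i, n / r ≤ x i + s ∧ x i ≤ (n + r - 1) / r + s := by
  classical
  refine ⟨1, fun n hn s hs x hpos hsumx hcard i => ?_⟩
  have hr0 : 0 < r := by omega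
  set q := n / r with hq
  set b := n % r with hb
  have hnb : r * q + b = n := Nat.div_add_mod n r
  have hbr : b < r := Nat.mod_lt _ hr0
  set k := r - 1 with hkdef
  have hk1 : 1 ≤ k := by omega
  have hkr : k + 1 = r := by omega
  set M := ∑ j ∈ Finset.univ.erase i, x j with hMdef
  have hMx : x i + M = n := by
    rw [hMdef, Finset.add_sum_erase _ x (Finset.mem_univ i), hsumx]
  set q' := M / k with hq'
  set b' := M % k with hb'
  have hMb : k * q' + b' = M := Nat.div_add_mod M k
  have hb'k : b' < k := Nat.mod_lt _ (by omega)
  -- edge count identities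
  have hT := turan_card n r hr0
  have hP := pair_sum r x
  rw [hsumx] at hP
  set T := (turanGraph n r).edgeFinset.card with hTdef
  set E := ∑ p ∈ Finset.univ.filter (fun p : Fin r × Fin r => p.1 < p.2), x p.1 * x p.2 with hEdef
  set Ssq := ∑ j, (x j)^2 with hSsqdef
  have hSsqle : Ssq ≤ r * q^2 + 2 * b * q + b + 2 * s := by
    have h1 : 2 * T + (r * q^2 + 2 * b * q + b) = n ^ 2 := hT
    have h2 : n ^ 2 = 2 * E + Ssq := hP
    have h3 : T ≤ E + s := hcard
    omega
  have hsplitS : Ssq = (x i)^2 + ∑ j ∈ Finset.univ.erase i, (x j)^2 := by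
    rw [hSsqdef, Finset.add_sum_erase _ (fun j => (x j)^2) (Finset.mem_univ i)]
  -- lower bound on the erased sum of squares, over ℤ
  have hcardE : (((Finset.univ : Finset (Fin r)).erase i).card : ℤ) = (k : ℤ) := by
    rw [Finset.card_erase_of_mem (Finset.mem_univ i), Finset.card_univ, Fintype.card_fin]
  have hMZ : ∑ j ∈ Finset.univ.erase i, ((x j : ℤ)) = (k : ℤ) * (q' : ℤ) + (b' : ℤ) := by
    have : ((M : ℕ) : ℤ) = (k : ℤ) * (q' : ℤ) + (b' : ℤ) := by exact_mod_cast hMb.symm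
    rw [← this, hMdef]
    push_cast
    rfl
  have hlow := min_sq (Finset.univ.erase i) (fun j => (x j : ℤ)) (k : ℤ) (q' : ℤ) (b' : ℤ)
    hcardE hMZ
  -- the main combined inequality (†)
  have hdagger : ((x i : ℤ))^2 + (k : ℤ) * (q' : ℤ)^2 + 2 * (b' : ℤ) * (q' : ℤ) + (b' : ℤ)
      ≤ ((k : ℤ) + 1) * (q : ℤ)^2 + 2 * (b : ℤ) * (q : ℤ) + (b : ℤ) + 2 * (s : ℤ) := by
    have h1 : ((Ssq : ℕ) : ℤ) ≤ (r : ℤ) * (q : ℤ)^2 + 2 * (b : ℤ) * (q : ℤ) + (b : ℤ)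
        + 2 * (s : ℤ) := by exact_mod_cast hSsqle
    have h2 : ((Ssq : ℕ) : ℤ) = ((x i : ℤ))^2 + ∑ j ∈ Finset.univ.erase i, ((x j : ℤ))^2 := by
      rw [hsplitS]; push_cast; rfl
    have h3 : ((r : ℕ) : ℤ) = (k : ℤ) + 1 := by exact_mod_cast hkr.symm
    rw [h2, h3] at h1
    have h4 : ∑ j ∈ Finset.univ.erase i, ((x j : ℤ))^2
        = ∑ j ∈ Finset.univ.erase i, (((fun j => (x j : ℤ)) j))^2 := rfl
    linarith [hlow]
  -- shared hypothesis for key_ineq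
  have hsumZ : ((k : ℤ) + 1) * (q : ℤ) + (b : ℤ) - (x i : ℤ) = (k : ℤ) * (q' : ℤ) + (b' : ℤ) := by
    have h1 : ((r : ℕ) : ℤ) * (q : ℤ) + (b : ℤ) = (n : ℤ) := by exact_mod_cast hnb
    have h2 : ((x i : ℕ) : ℤ) + (M : ℤ) = (n : ℤ) := by exact_mod_cast hMx
    have h3 : (k : ℤ) * (q' : ℤ) + (b' : ℤ) = (M : ℤ) := by exact_mod_cast hMb
    have h4 : ((r : ℕ) : ℤ) = (k : ℤ) + 1 := by exact_mod_cast hkr.symm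
    rw [h4] at h1
    linarith
  have hkey : ∀ hcase : (x i : ℤ) + (s : ℤ) + 1 ≤ (q : ℤ) ∨
      ((q : ℤ) + (s : ℤ) + 2 ≤ (x i : ℤ) ∧ 1 ≤ (b : ℤ)) ∨
      ((q : ℤ) + (s : ℤ) + 1 ≤ (x i : ℤ) ∧ (b : ℤ) = 0), False := by
    intro hcase
    have := key_ineq (k : ℤ) (s : ℤ) (b : ℤ) (b' : ℤ) (q : ℤ) (q' : ℤ) (x i : ℤ)
      (by exact_mod_cast hk1) (by positivity) (by positivity) (by exact_mod_cast Nat.le_of_lt_succ (by omega : b < k + 1))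
      (by positivity) (by exact_mod_cast hb'k) hsumZ hcase
    linarith [hdagger]
  constructor
  · -- lower bound
    by_contra hcon
    push_neg at hcon
    apply hkey
    left
    have : x i + s + 1 ≤ q := hcon
    exact_mod_cast this
  · -- upper bound
    by_contra hcon
    push_neg at hcon
    have hceil : (n + r - 1) / r = if b = 0 then q else q + 1 := by
      have h1 : n + r - 1 = (b + r - 1) + r * q := by omega
      rw [h1, Nat.add_mul_div_left _ _ hr0]
      rcases eq_or_ne b 0 with hb0 | hb0
      · rw [if_pos hb0, hb0]
        have : (0 + r - 1) / r = 0 := Nat.div_eq_of_lt (by omega)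
        omega
      · rw [if_neg hb0]
        have h2 : b + r - 1 = (b - 1) + r * 1 := by omega
        rw [h2, Nat.add_mul_div_left _ _ hr0]
        have : (b - 1) / r = 0 := Nat.div_eq_of_lt (by omega)
        omega
    apply hkey
    rcases eq_or_ne b 0 with hb0 | hb0
    · right; right
      refine ⟨?_, by exact_mod_cast hb0⟩
      rw [hceil, if_pos hb0] at hcon
      have : q + s + 1 ≤ x i := by omega
      exact_mod_cast this
    · right; left
      refine ⟨?_, by exact_mod_cast Nat.one_le_iff_ne_zero.2 hb0⟩
      rw [hceil, if_neg hb0] at hcon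
      have : q + s + 2 ≤ x i := by omega
      exact_mod_cast this
end

section
/- Let G be a graph with m edges and let F be a graph on f vertices with minimum degree at least 1 and matching number ν(F). Then the number of copies of F in G is at most C_F · m^{f - ν(F)} for a constant C_F depending only on F. -/
/-- The number of matchings of size `k` (sets of `k` pairwise vertex-disjoint edges) in `G`. -/
noncomputable def matchingCount {V : Type*} (G : SimpleGraph V) (k : ℕ) : ℕ :=
  Set.ncard {s : Finset (Sym2 V) | s.card = k ∧ ↑s ⊆ G.edgeSet ∧
    ∀ e ∈ s, ∀ f ∈ s, e ≠ f → ∀ v, v ∈ e → v ∉ f}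

/-- The matching number of `F`: the largest size of a matching in `F`. -/
noncomputable def matchNum {W : Type*} [Fintype W] (F : SimpleGraph W) : ℕ :=
  Nat.findGreatest (fun k => 0 < matchingCount F k) (Fintype.card W)

/-- The number of copies of `F` in `G`, counted as edge subsets of `G` which induce (on the
vertices they cover) a graph isomorphic to `F`. -/
noncomputable def copyCount {W V : Type*} (F : SimpleGraph W) (G : SimpleGraph V) : ℕ :=
  Set.ncard {A : Finset (Sym2 V) | ↑A ⊆ G.edgeSet ∧
    Nonempty (F ≃g ((SimpleGraph.fromEdgeSet (↑A : Set (Sym2 V))).induce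
      {v : V | ∃ e ∈ A, v ∈ e}))}

section AuxStmt6
open Finset

variable {W : Type*} [Fintype W] {F : SimpleGraph W}

lemma matching_pos : 0 < matchingCount F (matchNum F) := by
  have h0 : 0 < matchingCount F 0 := by
    rw [matchingCount, Set.ncard_pos (Set.toFinite _)]
    exact ⟨∅, by simp⟩
  exact Nat.findGreatest_spec (P := fun k => 0 < matchingCount F k) (Nat.zero_le _) h0

lemma sym2_mem_out {α : Type*} {e : Sym2 α} {v : α} (hv : v ∈ e) :
    v = e.out.1 ∨ v = e.out.2 := by
  have h2 : s(e.out.1, e.out.2) = e := by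
    exact e.out_eq
  rw [← h2, Sym2.mem_iff] at hv
  exact hv

lemma exists_cover (hmin : ∀ w : W, ∃ w', F.Adj w w') :
    ∃ T : Finset (Sym2 W), ↑T ⊆ F.edgeSet ∧
      T.card ≤ Fintype.card W - matchNum F ∧ ∀ w : W, ∃ e ∈ T, w ∈ e := by
  classical
  obtain ⟨M, hMcard, hMsub, hMdisj⟩ :
      ∃ M : Finset (Sym2 W), M.card = matchNum F ∧ ↑M ⊆ F.edgeSet ∧
        ∀ e ∈ M, ∀ f ∈ M, e ≠ f → ∀ v, v ∈ e → v ∉ f := by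
    obtain ⟨M, hM⟩ := Set.nonempty_of_ncard_ne_zero (matching_pos (F := F)).ne'
    exact ⟨M, hM.1, hM.2.1, hM.2.2⟩
  set cov : Finset W := M.biUnion (fun e => {e.out.1, e.out.2}) with hcov
  have hmemcov : ∀ v : W, v ∈ cov ↔ ∃ e ∈ M, v ∈ e := by
    intro v
    simp only [hcov, mem_biUnion, mem_insert, mem_singleton]
    constructor
    · rintro ⟨e, he, h | h⟩ <;> subst h
      exacts [⟨e, he, e.out_fst_mem⟩, ⟨e, he, e.out_snd_mem⟩]
    · rintro ⟨e, he, hv⟩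
      exact ⟨e, he, sym2_mem_out hv⟩
  have hcard2 : ∀ e ∈ M, ({e.out.1, e.out.2} : Finset W).card = 2 := by
    intro e he
    have hne : e.out.1 ≠ e.out.2 := by
      intro h
      have hd : ¬ e.IsDiag := (F.not_isDiag_of_mem_edgeSet (hMsub he))
      apply hd
      have h2 : s(e.out.1, e.out.2) = e := by
        exact e.out_eq
      rw [← h2]
      exact Sym2.mk_isDiag_iff.2 h
    rw [card_insert_of_notMem (by simpa using hne), card_singleton]
  have hcovcard : cov.card = 2 * M.card := by
    rw [hcov, card_biUnion]
    · rw [Finset.sum_congr rfl hcard2, Finset.sum_const, smul_eq_mul, mul_comm]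
    · intro e he f hf hef
      simp only [Finset.disjoint_left]
      intro v hv hv'
      simp only [mem_insert, mem_singleton] at hv hv'
      have hve : v ∈ e := by
        rcases hv with h | h <;> subst h
        exacts [e.out_fst_mem, e.out_snd_mem]
      have hvf : v ∈ f := by
        rcases hv' with h | h <;> subst h
        exacts [f.out_fst_mem, f.out_snd_mem]
      exact hMdisj e he f hf hef v hve hvf
  have h2nu : 2 * matchNum F ≤ Fintype.card W := by
    rw [← hMcard, ← hcovcard]
    exact card_le_univ _
  set U : Finset W := Finset.univ \ cov with hU
  set T : Finset (Sym2 W) :=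
    M ∪ U.image (fun u => s(u, Classical.choose (hmin u))) with hT
  refine ⟨T, ?_, ?_, ?_⟩
  · intro e he
    rw [hT, coe_union, Set.mem_union] at he
    rcases he with he | he
    · exact hMsub he
    · simp only [coe_image, Set.mem_image, mem_coe] at he
      obtain ⟨u, _, rfl⟩ := he
      exact (F.mem_edgeSet).2 (Classical.choose_spec (hmin u))
  · calc T.card ≤ M.card + (U.image _).card := card_union_le _ _
      _ ≤ M.card + U.card := by gcongr; exact card_image_le
      _ ≤ Fintype.card W - matchNum F := by
          have hUcard : U.card = Fintype.card W - cov.card := by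
            rw [hU, card_sdiff_of_subset (subset_univ _), card_univ]
          rw [hMcard, hUcard, hcovcard, hMcard]
          omega
  · intro w
    by_cases hw : w ∈ cov
    · obtain ⟨e, he, hwe⟩ := (hmemcov w).1 hw
      exact ⟨e, by simp [hT, he], hwe⟩
    · refine ⟨s(w, Classical.choose (hmin w)), ?_, Sym2.mem_mk_left _ _⟩
      rw [hT, mem_union]
      exact Or.inr (mem_image_of_mem _ (by simp [hU, hw]))

lemma exists_tuple {V : Type*} {G : SimpleGraph V} {A : Finset (Sym2 V)}
    (hT : ∃ T : Finset (Sym2 W), ↑T ⊆ F.edgeSet ∧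
      T.card ≤ Fintype.card W - matchNum F ∧ ∀ w : W, ∃ e ∈ T, w ∈ e)
    (hA : ↑A ⊆ G.edgeSet)
    (hiso : Nonempty (F ≃g ((SimpleGraph.fromEdgeSet (↑A : Set (Sym2 V))).induce
      {v : V | ∃ e ∈ A, v ∈ e}))) :
    ∃ t : Fin (Fintype.card W - matchNum F) → Sym2 V,
      (∀ i, t i ∈ A) ∧ ∀ e ∈ A, ∀ v ∈ e, ∃ i, v ∈ t i := by
  classical
  obtain ⟨φ⟩ := hiso
  set S : Set V := {v : V | ∃ e ∈ A, v ∈ e} with hS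
  set k := Fintype.card W - matchNum F with hk
  by_cases hW : IsEmpty W
  · have hk0 : k = 0 := by
      have h1 : matchNum F ≤ Fintype.card W := Nat.findGreatest_le _
      have h2 : Fintype.card W = 0 := Fintype.card_eq_zero
      omega
    refine ⟨fun i => absurd i.2 (by omega), fun i => absurd i.2 (by omega), ?_⟩
    intro e he v hv
    exact (hW.false (φ.symm ⟨v, ⟨e, he, hv⟩⟩)).elim
  · rw [not_isEmpty_iff] at hW
    obtain ⟨T, hTsub, hTcard, hTcov⟩ := hT
    obtain ⟨e₀, he₀, -⟩ := hTcov (Classical.arbitrary W)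
    set l := T.toList with hl
    have hlen : l.length ≤ k := by rw [hl, length_toList]; exact hTcard
    set σ : Fin k → Sym2 W := fun i => l.getD i e₀ with hσ
    have hσT : ∀ i, σ i ∈ T := by
      intro i
      by_cases hi : (i : ℕ) < l.length
      · rw [hσ]
        simp only [List.getD_eq_getElem?_getD]
        rw [List.getElem?_eq_getElem hi]
        simp only [Option.getD_some]
        exact mem_toList.1 (List.getElem_mem _)
      · rw [hσ]; simp only [List.getD_eq_getElem?_getD]
        rw [List.getElem?_eq_none (by omega)]
        simpa using he₀
    have hσsurj : ∀ x ∈ T, ∃ i : Fin k, σ i = x := by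
      intro x hx
      rw [← mem_toList, ← hl] at hx
      obtain ⟨j, hj, hx⟩ := List.mem_iff_getElem.1 hx
      refine ⟨⟨j, lt_of_lt_of_le hj hlen⟩, ?_⟩
      rw [hσ]
      simp only [List.getD_eq_getElem?_getD]
      rw [List.getElem?_eq_getElem hj]
      simpa using hx
    set ε : Sym2 W → Sym2 V := Sym2.map (fun w => (φ w : V)) with hε
    have hεA : ∀ x ∈ T, ε x ∈ A := by
      intro x hx
      induction x with
      | _ a b =>
        have hadj : F.Adj a b := (F.mem_edgeSet).1 (hTsub hx)
        have : (SimpleGraph.fromEdgeSet (↑A : Set (Sym2 V))).Adj (φ a) (φ b) :=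
          φ.map_adj_iff.2 hadj
        rw [SimpleGraph.fromEdgeSet_adj] at this
        rw [hε, Sym2.map_pair_eq]
        exact this.1
    refine ⟨fun i => ε (σ i), fun i => hεA _ (hσT i), ?_⟩
    intro e he v hv
    have hvS : v ∈ S := ⟨e, he, hv⟩
    set w := φ.symm ⟨v, hvS⟩ with hw
    obtain ⟨x, hxT, hwx⟩ := hTcov w
    obtain ⟨i, hi⟩ := hσsurj x hxT
    refine ⟨i, ?_⟩
    show v ∈ ε (σ i)
    rw [hi, hε, Sym2.mem_map]
    exact ⟨w, hwx, by rw [hw]; simp⟩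

end AuxStmt6

open Finset in
/-- If `F` has `f` vertices, minimum degree at least one and matching number `ν(F)`, then any
graph with `m` edges contains at most `C_F · m^(f - ν(F))` copies of `F`. -/
theorem stmt_6 {W : Type*} [Fintype W] (F : SimpleGraph W)
    (hmin : ∀ w : W, ∃ w', F.Adj w w') :
    ∃ C : ℝ, 0 < C ∧ ∀ (V : Type) [Fintype V] (G : SimpleGraph V),
      (copyCount F G : ℝ) ≤
        C * (G.edgeSet.ncard : ℝ) ^ (Fintype.card W - matchNum F) := by
  classical
  set k := Fintype.card W - matchNum F with hk
  refine ⟨(2:ℝ) ^ (2*k*(2*k+1)), by positivity, ?_⟩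
  intro V _ G
  have hTex := exists_cover hmin
  set 𝒞s := {A : Finset (Sym2 V) | ↑A ⊆ G.edgeSet ∧
    Nonempty (F ≃g ((SimpleGraph.fromEdgeSet (↑A : Set (Sym2 V))).induce
      {v : V | ∃ e ∈ A, v ∈ e}))} with h𝒞s
  have hfin : 𝒞s.Finite := Set.toFinite _
  have hcc : copyCount F G = hfin.toFinset.card := by
    rw [copyCount, Set.ncard_eq_toFinset_card _ hfin]
  set 𝒞 := hfin.toFinset with h𝒞
  have hex : ∀ A : {A // A ∈ 𝒞}, ∃ t : Fin k → Sym2 V,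
      (∀ i, t i ∈ A.1) ∧ ∀ e ∈ A.1, ∀ v ∈ e, ∃ i, v ∈ t i := by
    intro A
    have hA := (Set.Finite.mem_toFinset hfin).1 A.2
    exact exists_tuple hTex hA.1 hA.2
  set Φ : {A // A ∈ 𝒞} → (Fin k → Sym2 V) := fun A => (hex A).choose with hΦ
  set N := 2 ^ (2*k*(2*k+1)) with hN
  have hmain : 𝒞.card ≤ N * G.edgeFinset.card ^ k := by
    have hb := Finset.card_le_mul_card_image_of_maps_to
      (s := 𝒞.attach) (f := Φ)
      (t := Fintype.piFinset fun _ : Fin k => G.edgeFinset) ?_ N ?_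
    · rwa [card_attach, Fintype.card_piFinset, prod_const, card_univ,
        Fintype.card_fin] at hb
    · intro a _
      rw [Fintype.mem_piFinset]
      intro i
      rw [SimpleGraph.mem_edgeFinset]
      have hA := (Set.Finite.mem_toFinset hfin).1 a.2
      exact hA.1 ((hex a).choose_spec.1 i)
    · intro b _
      set cv : Finset V :=
        Finset.univ.biUnion (fun i : Fin k => {(b i).out.1, (b i).out.2}) with hcv
      have hcvcard : cv.card ≤ 2 * k :=
        calc cv.card ≤ ∑ _i : Fin k, 2 := le_trans card_biUnion_le
              (sum_le_sum (fun i _ => le_trans (card_insert_le _ _) (by simp)))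
          _ = 2 * k := by simp [mul_comm]
      have hmap : ∀ a ∈ {a ∈ 𝒞.attach | Φ a = b}, a.1 ∈ cv.sym2.powerset := by
        intro a ha
        rw [mem_filter] at ha
        rw [mem_powerset]
        intro e he
        rw [mem_sym2_iff]
        intro v hv
        obtain ⟨i, hvi⟩ := (hex a).choose_spec.2 e he v hv
        rw [show (hex a).choose = Φ a from rfl, ha.2] at hvi
        rw [hcv, mem_biUnion]
        refine ⟨i, mem_univ _, ?_⟩
        rcases sym2_mem_out hvi with h | h <;> simp [h]
      have hinj := Finset.card_le_card_of_injOn (fun a => a.1) (fun a ha => hmap a ha)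
        (fun a _ a' _ h => Subtype.ext h)
      refine le_trans hinj ?_
      rw [card_powerset]
      rw [hN]
      refine Nat.pow_le_pow_right (by norm_num) ?_
      rw [card_sym2, Nat.choose_two_right]
      have : (cv.card + 1) * (cv.card + 1 - 1) ≤ 2*k*(2*k+1) := by
        simp only [Nat.add_sub_cancel]
        nlinarith [hcvcard]
      exact le_trans (Nat.div_le_self _ _) this
  have hm : G.edgeSet.ncard = G.edgeFinset.card := Set.ncard_eq_toFinset_card' _
  rw [hcc, hm]
  calc (𝒞.card : ℝ) ≤ ((N * G.edgeFinset.card ^ k : ℕ) : ℝ) := by exact_mod_cast hmain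
    _ = 2 ^ (2*k*(2*k+1)) * (G.edgeFinset.card : ℝ) ^ k := by push_cast [hN]; ring
end

section
/- For every n ≥ 5, the Kneser graph K(n,2) is color-3-critical: (i) there exist 3 edges of K(n,2) whose deletion decreases the chromatic number from n-2 to n-3, and (ii) deleting any 2 vertices of K(n,2) leaves a graph of chromatic number n-2. -/
/-- The Kneser graph `K(n,2)`: vertices are the 2-element subsets of `{1,…,n}`, with two
vertices adjacent iff the corresponding sets are disjoint. -/
def kneser (n : ℕ) : SimpleGraph {s : Finset (Fin n) // s.card = 2} where
  Adj A B := A ≠ B ∧ Disjoint A.1 B.1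
  symm := ⟨fun _ _ h => ⟨h.1.symm, h.2.symm⟩⟩
  loopless := ⟨fun _ h => h.1 rfl⟩

namespace KneserProof


lemma pair_other {α : Type*} [DecidableEq α] {s : Finset α} (hs : s.card = 2) {b : α}
    (hb : b ∈ s) : ∃ x, x ≠ b ∧ s = {b, x} := by
  obtain ⟨u, v, huv, rfl⟩ := Finset.card_eq_two.mp hs
  rcases Finset.mem_insert.mp hb with rfl | hv
  · exact ⟨v, fun h => huv h.symm, rfl⟩
  · rcases Finset.mem_singleton.mp hv with rfl
    exact ⟨u, fun h => huv h, Finset.pair_comm u b⟩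

lemma arith {k j : ℕ} (h : (k + 3).choose 2 ≤ 3 * j + 2) (hj : j ≤ k) : False := by
  have h2 : 2 * ((k + 3).choose 2) = (k + 3) * (k + 2) := by
    rw [Nat.choose_two_right]
    have hd : 2 ∣ (k + 3) * (k + 2) := by
      rcases Nat.even_or_odd k with ⟨t, rfl⟩ | ⟨t, rfl⟩
      · exact ⟨(t + t + 3) * (t + 1), by ring⟩
      · exact ⟨(t + 2) * (2 * t + 3), by ring⟩
    exact Nat.mul_div_cancel' hd
  nlinarith [h2, h, hj, Nat.zero_le (k * k)]

lemma no_coloring (n m : ℕ) (hm : m + 3 ≤ n)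
    (R : Finset {s : Finset (Fin n) // s.card = 2}) (hR : R.card ≤ 2)
    (c : {s : Finset (Fin n) // s.card = 2} → Fin m)
    (hc : ∀ A B, A ∉ R → B ∉ R → A ≠ B → Disjoint A.1 B.1 → c A ≠ c B) : False := by
  classical
  have hn3 : 3 ≤ n := by omega
  -- dispose of m = 0
  rcases Nat.eq_zero_or_pos m with rfl | hm0
  · have h01 : (⟨0, by omega⟩ : Fin n) ≠ ⟨1, by omega⟩ := by simp [Fin.ext_iff]
    exact (c ⟨{⟨0, by omega⟩, ⟨1, by omega⟩}, Finset.card_pair h01⟩).elim0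
  -- color classes are intersecting
  have inter : ∀ A B : {s : Finset (Fin n) // s.card = 2}, A ∉ R → B ∉ R → c A = c B → A ≠ B →
      ∃ x, x ∈ A.1 ∧ x ∈ B.1 := by
    intro A B hA hB hcc hne
    by_contra h
    exact hc A B hA hB hne (Finset.disjoint_left.mpr (by push_neg at h; exact h)) hcc
  set Starlike : Fin m → Prop :=
    fun i => ∃ p : Fin n, ∀ A : {s : Finset (Fin n) // s.card = 2}, A ∉ R → c A = i → p ∈ A.1
    with hStarlike
  -- classification of non-starlike classes
  have classify : ∀ i : Fin m, ¬ Starlike i → ∃ T : Finset (Fin n), T.card = 3 ∧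
      ∀ A : {s : Finset (Fin n) // s.card = 2}, A ∉ R → c A = i → A.1 ⊆ T := by
    intro i hi
    have hi : ∀ p : Fin n, ∃ A : {s : Finset (Fin n) // s.card = 2},
        A ∉ R ∧ c A = i ∧ p ∉ A.1 := by
      intro p
      by_contra h
      push_neg at h
      exact hi ⟨p, h⟩
    obtain ⟨A, hAR, hAc, -⟩ := hi (⟨0, by omega⟩ : Fin n)
    obtain ⟨a, b, hab, hA⟩ := Finset.card_eq_two.mp A.2
    have haA : a ∈ A.1 := by rw [hA]; simp
    have hbA : b ∈ A.1 := by rw [hA]; simp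
    obtain ⟨B, hBR, hBc, haB⟩ := hi a
    have hBA : B ≠ A := fun h => haB (h ▸ haA)
    obtain ⟨x, hxB, hxA⟩ := inter B A hBR hAR (hBc.trans hAc.symm) hBA
    have hxb : x = b := by
      rw [hA] at hxA; rcases Finset.mem_insert.mp hxA with rfl | h
      · exact absurd hxB haB
      · exact Finset.mem_singleton.mp h
    have hbB : b ∈ B.1 := hxb ▸ hxB
    clear hxb hxB hxA
    obtain ⟨e, heb, hB⟩ := pair_other B.2 hbB
    have haeB : e ≠ a := fun h => haB (by rw [hB, h]; simp)
    obtain ⟨D, hDR, hDc, hbD⟩ := hi b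
    have hDA : D ≠ A := fun h => hbD (h ▸ hbA)
    have hDB : D ≠ B := fun h => hbD (by rw [h, hB]; simp)
    obtain ⟨y, hyD, hyA⟩ := inter D A hDR hAR (hDc.trans hAc.symm) hDA
    have haD : a ∈ D.1 := by
      rw [hA] at hyA; rcases Finset.mem_insert.mp hyA with rfl | h
      · exact hyD
      · exact absurd (Finset.mem_singleton.mp h ▸ hyD) hbD
    obtain ⟨z, hzD, hzB⟩ := inter D B hDR hBR (hDc.trans hBc.symm) hDB
    have heD : e ∈ D.1 := by
      rw [hB] at hzB; rcases Finset.mem_insert.mp hzB with rfl | h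
      · exact absurd hzD hbD
      · exact (Finset.mem_singleton.mp h) ▸ hzD
    clear hyD hyA hzD hzB
    have hD : D.1 = {a, e} := by
      apply (Finset.eq_of_subset_of_card_le ?_ ?_).symm
      · intro t ht
        rcases Finset.mem_insert.mp ht with rfl | ht
        · exact haD
        · exact Finset.mem_singleton.mp ht ▸ heD
      · rw [D.2, Finset.card_pair (Ne.symm haeB)]
    refine ⟨{a, b, e}, ?_, ?_⟩
    · rw [Finset.card_insert_of_notMem, Finset.card_pair heb.symm]
      simp only [Finset.mem_insert, Finset.mem_singleton]
      push_neg
      exact ⟨hab, fun h => haeB h.symm⟩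
    · intro F hFR hFc t htF
      by_contra htT
      simp only [Finset.mem_insert, Finset.mem_singleton] at htT
      push_neg at htT
      obtain ⟨hta, htb, hte⟩ := htT
      have hFA : F ≠ A := by
        intro h; rw [h, hA] at htF
        rcases Finset.mem_insert.mp htF with rfl | h'
        · exact hta rfl
        · exact htb (Finset.mem_singleton.mp h')
      have hFB : F ≠ B := by
        intro h; rw [h, hB] at htF
        rcases Finset.mem_insert.mp htF with rfl | h'
        · exact htb rfl
        · exact hte (Finset.mem_singleton.mp h')
      have hFD : F ≠ D := by
        intro h; rw [h, hD] at htF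
        rcases Finset.mem_insert.mp htF with rfl | h'
        · exact hta rfl
        · exact hte (Finset.mem_singleton.mp h')
      obtain ⟨w, hwt, hF⟩ := pair_other F.2 htF
      have hw : ∀ (G : {s : Finset (Fin n) // s.card = 2}), F ≠ G → G.1 ⊆ ({a,b,e} : Finset (Fin n)) → G ∉ R → c G = i →
          ∃ u, u ∈ G.1 ∧ w = u := by
        intro G hFG hGsub hGR hGc
        obtain ⟨u, huF, huG⟩ := inter F G hFR hGR (hFc.trans hGc.symm) hFG
        refine ⟨u, huG, ?_⟩
        rw [hF] at huF
        rcases Finset.mem_insert.mp huF with rfl | h'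
        · refine absurd (hGsub huG) ?_
          simp only [Finset.mem_insert, Finset.mem_singleton]
          push_neg
          exact ⟨hta, htb, hte⟩
        · exact (Finset.mem_singleton.mp h').symm
      have hsubA : A.1 ⊆ ({a,b,e} : Finset (Fin n)) := by
        rw [hA]; intro u hu
        rcases Finset.mem_insert.mp hu with rfl | hu
        · exact Finset.mem_insert_self _ _
        · rcases Finset.mem_singleton.mp hu with rfl
          exact Finset.mem_insert_of_mem (Finset.mem_insert_self _ _)
      have hsubB : B.1 ⊆ ({a,b,e} : Finset (Fin n)) := by
        rw [hB]; intro u hu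
        rcases Finset.mem_insert.mp hu with rfl | hu
        · exact Finset.mem_insert_of_mem (Finset.mem_insert_self _ _)
        · rcases Finset.mem_singleton.mp hu with rfl
          exact Finset.mem_insert_of_mem (Finset.mem_insert_of_mem (Finset.mem_singleton_self _))
      have hsubD : D.1 ⊆ ({a,b,e} : Finset (Fin n)) := by
        rw [hD]; intro u hu
        rcases Finset.mem_insert.mp hu with rfl | hu
        · exact Finset.mem_insert_self _ _
        · rcases Finset.mem_singleton.mp hu with rfl
          exact Finset.mem_insert_of_mem (Finset.mem_insert_of_mem (Finset.mem_singleton_self _))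
      obtain ⟨u1, hu1, hwu1⟩ := hw A hFA hsubA hAR hAc
      obtain ⟨u2, hu2, hwu2⟩ := hw B hFB hsubB hBR hBc
      obtain ⟨u3, hu3, hwu3⟩ := hw D hFD hsubD hDR hDc
      rw [hA] at hu1; rw [hB] at hu2; rw [hD] at hu3
      simp only [Finset.mem_insert, Finset.mem_singleton] at hu1 hu2 hu3
      rw [← hwu1] at hu1
      rw [← hwu2] at hu2
      rw [← hwu3] at hu3
      rcases hu1 with rfl | rfl
      · rcases hu2 with h2 | h2
        · exact hab h2
        · exact haeB h2.symm
      · rcases hu3 with h3 | h3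
        · exact hab h3.symm
        · exact heb h3.symm
  -- choose centers for starlike classes
  have hch : ∀ i : Fin m, ∃ p : Fin n, Starlike i →
      ∀ A : {s : Finset (Fin n) // s.card = 2}, A ∉ R → c A = i → p ∈ A.1 := by
    intro i
    by_cases h : Starlike i
    · obtain ⟨p, hp⟩ := h
      exact ⟨p, fun _ => hp⟩
    · exact ⟨⟨0, by omega⟩, fun hs => absurd hs h⟩
  choose ctr hctr using hch
  set ST : Finset (Fin m) := Finset.univ.filter Starlike with hST
  set X : Finset (Fin n) := ST.image ctr with hX
  set P : Finset (Finset (Fin n)) := (Xᶜ.powersetCard 2) \ R.image (fun v => v.1) with hP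
  have hPmem : ∀ s ∈ P, ∃ h : s.card = 2, s ⊆ Xᶜ ∧
      (⟨s, h⟩ : {t : Finset (Fin n) // t.card = 2}) ∉ R := by
    intro s hs
    obtain ⟨hs1, hs2⟩ := Finset.mem_sdiff.mp hs
    obtain ⟨hsub, hcard⟩ := Finset.mem_powersetCard.mp hs1
    exact ⟨hcard, hsub, fun hmem => hs2 (Finset.mem_image.mpr ⟨_, hmem, rfl⟩)⟩
  set g : Finset (Fin n) → Fin m := fun s => if h : s.card = 2 then c ⟨s, h⟩ else ⟨0, hm0⟩
    with hg
  have hgnotST : ∀ s ∈ P, g s ∉ ST := by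
    intro s hs hmem
    obtain ⟨h2, hsub, hnR⟩ := hPmem s hs
    have hgs : g s = c ⟨s, h2⟩ := dif_pos h2
    have hstar : Starlike (g s) := (Finset.mem_filter.mp hmem).2
    have hin := hctr (g s) hstar ⟨s, h2⟩ hnR hgs.symm
    have hXmem : ctr (g s) ∈ X := Finset.mem_image.mpr ⟨g s, hmem, rfl⟩
    exact (Finset.mem_compl.mp (hsub hin)) hXmem
  have hfib : ∀ i ∈ P.image g, (P.filter (fun s => g s = i)).card ≤ 3 := by
    intro i hi
    obtain ⟨s0, hs0P, hs0⟩ := Finset.mem_image.mp hi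
    have hiST : ¬ Starlike i := by
      intro h
      exact hgnotST s0 hs0P (by rw [hs0]; exact Finset.mem_filter.mpr ⟨Finset.mem_univ _, h⟩)
    obtain ⟨T, hT3, hTsub⟩ := classify i hiST
    have hsubset : P.filter (fun s => g s = i) ⊆ T.powersetCard 2 := by
      intro s hs
      obtain ⟨hsP, hgs⟩ := Finset.mem_filter.mp hs
      obtain ⟨h2, hsub, hnR⟩ := hPmem s hsP
      have hgs2 : g s = c ⟨s, h2⟩ := dif_pos h2
      have hci : c ⟨s, h2⟩ = i := hgs2.symm.trans hgs
      exact Finset.mem_powersetCard.mpr ⟨hTsub ⟨s, h2⟩ hnR hci, h2⟩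
    calc (P.filter (fun s => g s = i)).card ≤ (T.powersetCard 2).card :=
          Finset.card_le_card hsubset
      _ = 3 := by
          rw [Finset.card_powersetCard, hT3]
          decide

  have hcount : P.card ≤ 3 * (P.image g).card := Finset.card_le_mul_card_image P 3 hfib
  have himg : (P.image g).card ≤ m - ST.card := by
    have hsub : P.image g ⊆ STᶜ := fun i hi => by
      obtain ⟨s, hsP, rfl⟩ := Finset.mem_image.mp hi
      exact Finset.mem_compl.mpr (hgnotST s hsP)
    calc (P.image g).card ≤ STᶜ.card := Finset.card_le_card hsub
      _ = m - ST.card := by rw [Finset.card_compl, Fintype.card_fin]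
  have hXcard : X.card ≤ ST.card := Finset.card_image_le
  have hCcard : Xᶜ.card = n - X.card := by rw [Finset.card_compl, Fintype.card_fin]
  have hRim : (R.image (fun v => v.1)).card ≤ 2 := le_trans Finset.card_image_le hR
  have hPlow : (Xᶜ.card).choose 2 - 2 ≤ P.card := by
    have hle := Finset.le_card_sdiff (R.image (fun v => v.1)) (Xᶜ.powersetCard 2)
    rw [Finset.card_powersetCard] at hle
    rw [← hP] at hle
    omega
  have hSTm : ST.card ≤ m := le_trans (Finset.card_le_univ ST) (by simp)
  obtain ⟨k, hk⟩ : ∃ k, n - ST.card = k + 3 := ⟨n - ST.card - 3, by omega⟩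
  have hmono : (n - ST.card).choose 2 ≤ (Xᶜ.card).choose 2 :=
    Nat.choose_le_choose 2 (by omega)
  rw [hk] at hmono
  exact arith (k := k) (j := m - ST.card) (by omega) (by omega)



/-- chromatic number characterization -/
lemma chrom_eq {W : Type*} (G : SimpleGraph W) (k : ℕ) (hk : 1 ≤ k) (h1 : G.Colorable k)
    (h2 : ¬ G.Colorable (k - 1)) : G.chromaticNumber = (k : ℕ∞) := by
  refine le_antisymm h1.chromaticNumber_le ?_
  rw [SimpleGraph.chromaticNumber]
  refine le_iInf₂ fun j hj => ?_
  have hj' : SimpleGraph.Colorable G j := hj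
  have : k ≤ j := by
    by_contra h
    exact h2 (hj'.mono (by omega))
  exact_mod_cast this

/-- the standard (n-2)-coloring of K(n,2) -/
lemma colorable_kneser (n : ℕ) (hn : 5 ≤ n) : (kneser n).Colorable (n - 2) := by
  have hne : ∀ A : {s : Finset (Fin n) // s.card = 2}, A.1.Nonempty := fun A =>
    Finset.card_pos.mp (by rw [A.2]; omega)
  refine ⟨SimpleGraph.Coloring.mk
    (fun A => (⟨min (A.1.min' (hne A)).val (n - 3), by omega⟩ : Fin (n - 2))) ?_⟩
  intro A B hAdj heq
  obtain ⟨hAB, hd⟩ := hAdj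
  rw [Fin.mk.injEq] at heq
  by_cases ha : (A.1.min' (hne A)).val < n - 3
  · have hab : (A.1.min' (hne A)).val = (B.1.min' (hne B)).val := by omega
    have : A.1.min' (hne A) ∈ B.1 := by
      rw [show A.1.min' (hne A) = B.1.min' (hne B) from Fin.ext hab]
      exact Finset.min'_mem _ _
    exact Finset.disjoint_left.mp hd (Finset.min'_mem _ _) this
  · have hb : ¬ (B.1.min' (hne B)).val < n - 3 := by omega
    have hsub : ∀ (C : {s : Finset (Fin n) // s.card = 2}),
        ¬ (C.1.min' (hne C)).val < n - 3 →
        C.1 ⊆ ({⟨n-3, by omega⟩, ⟨n-2, by omega⟩, ⟨n-1, by omega⟩} : Finset (Fin n)) := by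
      intro C hC x hx
      have h1 := Finset.min'_le C.1 x hx
      have h2 := x.isLt
      simp only [Finset.mem_insert, Finset.mem_singleton, Fin.ext_iff]
      omega
    have hcard : ({⟨n-3, by omega⟩, ⟨n-2, by omega⟩, ⟨n-1, by omega⟩} :
        Finset (Fin n)).card ≤ 3 := by
      apply le_trans (Finset.card_insert_le _ _)
      apply Nat.succ_le_succ
      apply le_trans (Finset.card_insert_le _ _)
      exact Nat.succ_le_succ (le_of_eq (Finset.card_singleton _))
    have hunion : (A.1 ∪ B.1).card = 4 := by
      rw [Finset.card_union_of_disjoint hd, A.2, B.2]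
    have := Finset.card_le_card (Finset.union_subset (hsub A ha) (hsub B hb))
    omega



/-- a 2-set vertex from two distinct indices -/
def vtx (n i j : ℕ) (hi : i < n) (hj : j < n) (hij : i ≠ j) :
    {s : Finset (Fin n) // s.card = 2} :=
  ⟨{⟨i, hi⟩, ⟨j, hj⟩}, Finset.card_pair (by simp [Fin.ext_iff]; exact hij)⟩

lemma vtx_ne_left {n i j k l : ℕ} {hi hj hk hl hij hkl} (h1 : i ≠ k) (h2 : i ≠ l) :
    vtx n i j hi hj hij ≠ vtx n k l hk hl hkl := by
  intro he
  have hval := congrArg (fun v => v.1) he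
  simp only [vtx] at hval
  have hx : (⟨i, hi⟩ : Fin n) ∈ ({⟨k, hk⟩, ⟨l, hl⟩} : Finset (Fin n)) := by
    rw [← hval]; exact Finset.mem_insert_self _ _
  rcases Finset.mem_insert.mp hx with h | h
  · exact h1 (by simpa [Fin.ext_iff] using h)
  · exact h2 (by simpa [Fin.ext_iff] using Finset.mem_singleton.mp h)

lemma vtx_ne_right {n i j k l : ℕ} {hi hj hk hl hij hkl} (h1 : j ≠ k) (h2 : j ≠ l) :
    vtx n i j hi hj hij ≠ vtx n k l hk hl hkl := by
  intro he
  have hval := congrArg (fun v => v.1) he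
  simp only [vtx] at hval
  have hx : (⟨j, hj⟩ : Fin n) ∈ ({⟨k, hk⟩, ⟨l, hl⟩} : Finset (Fin n)) := by
    rw [← hval]; exact Finset.mem_insert_of_mem (Finset.mem_singleton_self _)
  rcases Finset.mem_insert.mp hx with h | h
  · exact h1 (by simpa [Fin.ext_iff] using h)
  · exact h2 (by simpa [Fin.ext_iff] using Finset.mem_singleton.mp h)

/-- the three deleted edges: the perfect matchings on the last four points -/
def Edel (n : ℕ) (hn : 5 ≤ n) : Finset (Sym2 {s : Finset (Fin n) // s.card = 2}) :=
  { s(vtx n (n-4) (n-3) (by omega) (by omega) (by omega),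
      vtx n (n-2) (n-1) (by omega) (by omega) (by omega)),
    s(vtx n (n-4) (n-2) (by omega) (by omega) (by omega),
      vtx n (n-3) (n-1) (by omega) (by omega) (by omega)),
    s(vtx n (n-4) (n-1) (by omega) (by omega) (by omega),
      vtx n (n-3) (n-2) (by omega) (by omega) (by omega)) }

lemma Edel_card (n : ℕ) (hn : 5 ≤ n) : (Edel n hn).card = 3 := by
  rw [Edel, Finset.card_insert_of_notMem, Finset.card_insert_of_notMem,
    Finset.card_singleton]
  · simp only [Finset.mem_singleton]
    intro h
    rcases Sym2.eq_iff.mp h with ⟨h1, -⟩ | ⟨h1, -⟩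
    · exact vtx_ne_right (by omega) (by omega) h1
    · exact vtx_ne_left (by omega) (by omega) h1
  · simp only [Finset.mem_insert, Finset.mem_singleton]
    push_neg
    constructor
    · intro h
      rcases Sym2.eq_iff.mp h with ⟨h1, -⟩ | ⟨h1, -⟩
      · exact vtx_ne_right (by omega) (by omega) h1
      · exact vtx_ne_left (by omega) (by omega) h1
    · intro h
      rcases Sym2.eq_iff.mp h with ⟨h1, -⟩ | ⟨h1, -⟩
      · exact vtx_ne_right (by omega) (by omega) h1
      · exact vtx_ne_left (by omega) (by omega) h1

lemma Edel_sub (n : ℕ) (hn : 5 ≤ n) : ↑(Edel n hn) ⊆ (kneser n).edgeSet := by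
  have hadj : ∀ (i j k l : ℕ) (hi : i < n) (hj : j < n) (hk : k < n) (hl : l < n)
      (hij : i ≠ j) (hkl : k ≠ l), i ≠ k → i ≠ l → j ≠ k → j ≠ l →
      (kneser n).Adj (vtx n i j hi hj hij) (vtx n k l hk hl hkl) := by
    intro i j k l hi hj hk hl hij hkl h1 h2 h3 h4
    refine ⟨vtx_ne_left h1 h2, ?_⟩
    rw [Finset.disjoint_left]
    intro x hx hx'
    simp only [vtx, Finset.mem_insert, Finset.mem_singleton, Fin.ext_iff] at hx hx'
    rcases hx with h | h <;> rcases hx' with h' | h' <;> omega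
  intro e he
  rw [Edel] at he
  simp only [Finset.coe_insert, Set.mem_insert_iff, Finset.coe_singleton,
    Set.mem_singleton_iff] at he
  rcases he with rfl | rfl | rfl <;>
    exact (kneser n).mem_edgeSet.mpr (hadj _ _ _ _ _ _ _ _ _ _
      (by omega) (by omega) (by omega) (by omega))

lemma mem_vtx {n i j : ℕ} {hi hj hij} {x : Fin n} :
    x ∈ (vtx n i j hi hj hij).1 ↔ (x.val = i ∨ x.val = j) := by
  simp [vtx, Fin.ext_iff]

def T4 (n : ℕ) (hn : 5 ≤ n) : Finset (Fin n) :=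
  {⟨n-4, by omega⟩, ⟨n-3, by omega⟩, ⟨n-2, by omega⟩, ⟨n-1, by omega⟩}

lemma mem_T4 {n : ℕ} {hn : 5 ≤ n} {x : Fin n} :
    x ∈ T4 n hn ↔ (x.val = n-4 ∨ x.val = n-3 ∨ x.val = n-2 ∨ x.val = n-1) := by
  simp [T4, Fin.ext_iff]

lemma T4_card (n : ℕ) (hn : 5 ≤ n) : (T4 n hn).card ≤ 4 := by
  rw [T4]
  apply le_trans (Finset.card_insert_le _ _)
  apply Nat.succ_le_succ
  apply le_trans (Finset.card_insert_le _ _)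
  apply Nat.succ_le_succ
  apply le_trans (Finset.card_insert_le _ _)
  exact Nat.succ_le_succ (le_of_eq (Finset.card_singleton _))

lemma Edel_mem1 (n : ℕ) (hn : 5 ≤ n) :
    s(vtx n (n-4) (n-3) (by omega) (by omega) (by omega),
      vtx n (n-2) (n-1) (by omega) (by omega) (by omega)) ∈ Edel n hn := by
  rw [Edel]
  exact Finset.mem_insert_self _ _

lemma Edel_mem2 (n : ℕ) (hn : 5 ≤ n) :
    s(vtx n (n-4) (n-2) (by omega) (by omega) (by omega),
      vtx n (n-3) (n-1) (by omega) (by omega) (by omega)) ∈ Edel n hn := by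
  rw [Edel]
  exact Finset.mem_insert_of_mem (Finset.mem_insert_self _ _)

lemma Edel_mem3 (n : ℕ) (hn : 5 ≤ n) :
    s(vtx n (n-4) (n-1) (by omega) (by omega) (by omega),
      vtx n (n-3) (n-2) (by omega) (by omega) (by omega)) ∈ Edel n hn := by
  rw [Edel]
  exact Finset.mem_insert_of_mem (Finset.mem_insert_of_mem (Finset.mem_singleton_self _))

lemma main_step (n : ℕ) (hn : 5 ≤ n) (A B : {s : Finset (Fin n) // s.card = 2})
    (hU : A.1 ∪ B.1 = T4 n hn) (hd : Disjoint A.1 B.1)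
    (haA : (⟨n-4, by omega⟩ : Fin n) ∈ A.1) : s(A, B) ∈ Edel n hn := by
  obtain ⟨t, hta, hAeq⟩ := pair_other A.2 haA
  have htT : t ∈ T4 n hn := by
    rw [← hU]
    apply Finset.mem_union_left
    rw [hAeq]
    exact Finset.mem_insert_of_mem (Finset.mem_singleton_self _)
  rw [mem_T4] at htT
  have hta' : t.val ≠ n - 4 := fun h => hta (Fin.ext h)
  have hAv : ∀ (jj : ℕ) (hj : jj < n) (hij : n-4 ≠ jj), t.val = jj →
      A = vtx n (n-4) jj (by omega) hj hij := by
    intro jj hj hij ht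
    apply Subtype.ext
    rw [hAeq, show t = ⟨jj, hj⟩ from Fin.ext ht]
    rfl
  have hBv : ∀ (k l : ℕ) (hk : k < n) (hl : l < n) (hkl : k ≠ l),
      (∀ x : Fin n, x ∈ T4 n hn → x ∉ A.1 → (x.val = k ∨ x.val = l)) →
      B = vtx n k l hk hl hkl := by
    intro k l hk hl hkl hcond
    apply Subtype.ext
    apply Finset.eq_of_subset_of_card_le
    · intro x hx
      have hxT : x ∈ T4 n hn := by rw [← hU]; exact Finset.mem_union_right _ hx
      have hxA : x ∉ A.1 := Finset.disjoint_right.mp hd hx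
      rw [mem_vtx]
      exact hcond x hxT hxA
    · rw [B.2, (vtx n k l hk hl hkl).2]
  have hcond0 : ∀ x : Fin n, x ∉ A.1 → (x.val ≠ n - 4 ∧ x.val ≠ t.val) := by
    intro x hxA
    rw [hAeq] at hxA
    simp only [Finset.mem_insert, Finset.mem_singleton, Fin.ext_iff] at hxA
    push_neg at hxA
    exact hxA
  rcases htT with h | h | h | h
  · exact absurd h hta'
  · have h1 : A = vtx n (n-4) (n-3) (by omega) (by omega) (by omega) :=
      hAv (n-3) (by omega) (by omega) h
    have h2 : B = vtx n (n-2) (n-1) (by omega) (by omega) (by omega) := by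
      apply hBv
      intro x hxT hxA
      rw [mem_T4] at hxT
      have := hcond0 x hxA
      omega
    rw [h1, h2]
    exact Edel_mem1 n hn
  · have h1 : A = vtx n (n-4) (n-2) (by omega) (by omega) (by omega) :=
      hAv (n-2) (by omega) (by omega) h
    have h2 : B = vtx n (n-3) (n-1) (by omega) (by omega) (by omega) := by
      apply hBv
      intro x hxT hxA
      rw [mem_T4] at hxT
      have := hcond0 x hxA
      omega
    rw [h1, h2]
    exact Edel_mem2 n hn
  · have h1 : A = vtx n (n-4) (n-1) (by omega) (by omega) (by omega) :=
      hAv (n-1) (by omega) (by omega) h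
    have h2 : B = vtx n (n-3) (n-2) (by omega) (by omega) (by omega) := by
      apply hBv
      intro x hxT hxA
      rw [mem_T4] at hxT
      have := hcond0 x hxA
      omega
    rw [h1, h2]
    exact Edel_mem3 n hn

/-- any two disjoint 2-subsets of the last four points form a deleted edge -/
lemma in_Edel (n : ℕ) (hn : 5 ≤ n) (A B : {s : Finset (Fin n) // s.card = 2})
    (hA : ∀ x ∈ A.1, n - 4 ≤ x.val) (hB : ∀ x ∈ B.1, n - 4 ≤ x.val)
    (hd : Disjoint A.1 B.1) : s(A, B) ∈ Edel n hn := by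
  have hsub : ∀ (C : {s : Finset (Fin n) // s.card = 2}),
      (∀ x ∈ C.1, n - 4 ≤ x.val) → C.1 ⊆ T4 n hn := by
    intro C hC x hx
    have h1 := hC x hx
    have h2 := x.isLt
    rw [mem_T4]
    omega
  have hU : A.1 ∪ B.1 = T4 n hn := by
    apply Finset.eq_of_subset_of_card_le (Finset.union_subset (hsub A hA) (hsub B hB))
    rw [Finset.card_union_of_disjoint hd, A.2, B.2]
    exact T4_card n hn
  have haT : (⟨n-4, by omega⟩ : Fin n) ∈ T4 n hn := by rw [mem_T4]; left; rfl
  rw [← hU] at haT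
  rcases Finset.mem_union.mp haT with h | h
  · exact main_step n hn A B hU hd h
  · rw [Sym2.eq_swap]
    exact main_step n hn B A (by rw [Finset.union_comm]; exact hU) hd.symm h

/-- the (n-3)-coloring of the edge-deleted Kneser graph -/
lemma colorable_deleted (n : ℕ) (hn : 5 ≤ n) :
    ((kneser n).deleteEdges ↑(Edel n hn)).Colorable (n - 3) := by
  have hne : ∀ A : {s : Finset (Fin n) // s.card = 2}, A.1.Nonempty := fun A =>
    Finset.card_pos.mp (by rw [A.2]; omega)
  refine ⟨SimpleGraph.Coloring.mk
    (fun A => (⟨min (A.1.min' (hne A)).val (n - 4), by omega⟩ : Fin (n - 3))) ?_⟩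
  intro A B hAdj heq
  rw [SimpleGraph.deleteEdges_adj] at hAdj
  obtain ⟨⟨hAB, hd⟩, hnotE⟩ := hAdj
  rw [Fin.mk.injEq] at heq
  by_cases ha : (A.1.min' (hne A)).val < n - 4
  · have hab : (A.1.min' (hne A)).val = (B.1.min' (hne B)).val := by omega
    have : A.1.min' (hne A) ∈ B.1 := by
      rw [show A.1.min' (hne A) = B.1.min' (hne B) from Fin.ext hab]
      exact Finset.min'_mem _ _
    exact Finset.disjoint_left.mp hd (Finset.min'_mem _ _) this
  · have hb : ¬ (B.1.min' (hne B)).val < n - 4 := by omega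
    have hbig : ∀ (C : {s : Finset (Fin n) // s.card = 2}),
        ¬ (C.1.min' (hne C)).val < n - 4 → ∀ x ∈ C.1, n - 4 ≤ x.val := by
      intro C hC x hx
      have h1 := Finset.min'_le C.1 x hx
      omega
    exact hnotE (in_Edel n hn A B (hbig A ha) (hbig B hb) hd)


lemma not_colorable_kneser (n m : ℕ) (hm : m + 3 ≤ n) : ¬ (kneser n).Colorable m := by
  rintro ⟨col⟩
  exact no_coloring n m hm ∅ (by simp) col (fun A B _ _ hne hd => col.valid ⟨hne, hd⟩)

lemma not_colorable_induce (n m : ℕ) (hm : m + 3 ≤ n) (hm0 : 0 < m)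
    (R : Finset {s : Finset (Fin n) // s.card = 2}) (hR : R.card ≤ 2) :
    ¬ ((kneser n).induce {v | v ∉ R}).Colorable m := by
  classical
  rintro ⟨col⟩
  refine no_coloring n m hm R hR
    (fun v => if h : v ∉ R then col ⟨v, h⟩ else ⟨0, hm0⟩) ?_
  intro A B hA hB hne hd
  have hv := col.valid
    (show ((kneser n).induce {v | v ∉ R}).Adj ⟨A, hA⟩ ⟨B, hB⟩ from ⟨hne, hd⟩)
  simpa only [dif_pos hA, dif_pos hB] using hv

lemma colorable_induce {W : Type*} (G : SimpleGraph W) (s : Set W) {k : ℕ}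
    (h : G.Colorable k) : (G.induce s).Colorable k := by
  obtain ⟨col⟩ := h
  exact ⟨col.comp (SimpleGraph.Hom.comap Subtype.val G)⟩

lemma lift_colorable (n : ℕ) (hn : 5 ≤ n) (m : ℕ)
    (h : ((kneser n).deleteEdges ↑(Edel n hn)).Colorable m) : (kneser (n-1)).Colorable m := by
  obtain ⟨col⟩ := h
  have hle : n - 1 ≤ n := by omega
  set F : {s : Finset (Fin (n-1)) // s.card = 2} → {s : Finset (Fin n) // s.card = 2} :=
    fun A => ⟨A.1.map (Fin.castLEOrderEmb hle).toEmbedding,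
      by rw [Finset.card_map]; exact A.2⟩ with hF
  have hlast : ∀ A, (⟨n-1, by omega⟩ : Fin n) ∉ (F A).1 := by
    intro A hmem
    simp only [hF, Finset.mem_map] at hmem
    obtain ⟨x, -, hx⟩ := hmem
    have hx' : (x : ℕ) = n - 1 := by
      have := congrArg Fin.val hx
      exact this
    have := x.isLt
    omega
  have hlastin : ∀ (i j : ℕ) (hi : i < n) (hj : j < n) (hij : i ≠ j), j = n-1 →
      ∀ A, F A ≠ vtx n i j hi hj hij := by
    intro i j hi hj hij hj1 A hC
    apply hlast A
    rw [hC, mem_vtx]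
    right
    simpa using hj1.symm
  have hFadj : ∀ A B, (kneser (n-1)).Adj A B →
      ((kneser n).deleteEdges ↑(Edel n hn)).Adj (F A) (F B) := by
    rintro A B ⟨hne, hd⟩
    rw [SimpleGraph.deleteEdges_adj]
    refine ⟨⟨?_, ?_⟩, ?_⟩
    · intro h
      apply hne
      apply Subtype.ext
      have hval := congrArg (fun v => v.1) h
      simp only [hF] at hval
      exact Finset.map_injective _ hval
    · simp only [hF]
      rw [Finset.disjoint_left]
      intro x hx hx'
      rw [Finset.mem_map] at hx hx'
      obtain ⟨u, hu, hux⟩ := hx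
      obtain ⟨v, hv, hvx⟩ := hx'
      have huv : u = v := (Fin.castLEOrderEmb hle).toEmbedding.injective (hux.trans hvx.symm)
      exact Finset.disjoint_left.mp hd hu (huv ▸ hv)
    · intro hmem
      have hmem' : s(F A, F B) ∈ Edel n hn := hmem
      rw [Edel] at hmem'
      simp only [Finset.mem_insert, Finset.mem_singleton] at hmem'
      rcases hmem' with h | h | h
      · rcases Sym2.eq_iff.mp h with ⟨-, h2⟩ | ⟨h1, -⟩
        · exact hlastin _ _ _ _ _ rfl B h2
        · exact hlastin _ _ _ _ _ rfl A h1
      · rcases Sym2.eq_iff.mp h with ⟨-, h2⟩ | ⟨h1, -⟩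
        · exact hlastin _ _ _ _ _ rfl B h2
        · exact hlastin _ _ _ _ _ rfl A h1
      · rcases Sym2.eq_iff.mp h with ⟨h1, -⟩ | ⟨-, h2⟩
        · exact hlastin _ _ _ _ _ rfl A h1
        · exact hlastin _ _ _ _ _ rfl B h2
  exact ⟨SimpleGraph.Coloring.mk (fun A => col (F A))
    (fun {A B} hAdj => col.valid (hFadj A B hAdj))⟩

end KneserProof

/-- For `n ≥ 5`, the Kneser graph `K(n,2)` is color-3-critical: it has chromatic number `n-2`,
there are 3 edges whose deletion decreases the chromatic number to `n-3`, and deleting any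
2 vertices leaves a graph of chromatic number `n-2`. -/
theorem stmt_8 (n : ℕ) (hn : 5 ≤ n) :
    (kneser n).chromaticNumber = ((n - 2 : ℕ) : ℕ∞) ∧
    (∃ E : Finset (Sym2 {s : Finset (Fin n) // s.card = 2}),
      ↑E ⊆ (kneser n).edgeSet ∧ E.card = 3 ∧
      ((kneser n).deleteEdges ↑E).chromaticNumber = ((n - 3 : ℕ) : ℕ∞)) ∧
    (∀ S : Finset {s : Finset (Fin n) // s.card = 2}, S.card = 2 →
      ((kneser n).induce {v | v ∉ S}).chromaticNumber = ((n - 2 : ℕ) : ℕ∞)) := by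
  refine ⟨?_, ?_, ?_⟩
  · refine KneserProof.chrom_eq _ _ (by omega) (KneserProof.colorable_kneser n hn) ?_
    exact KneserProof.not_colorable_kneser n (n - 2 - 1) (by omega)
  · refine ⟨KneserProof.Edel n hn, KneserProof.Edel_sub n hn, KneserProof.Edel_card n hn, ?_⟩
    refine KneserProof.chrom_eq _ _ (by omega) (KneserProof.colorable_deleted n hn) ?_
    intro hcol
    exact KneserProof.not_colorable_kneser (n-1) (n - 3 - 1) (by omega)
      (KneserProof.lift_colorable n hn _ hcol)
  · intro S hS
    refine KneserProof.chrom_eq _ _ (by omega)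
      (KneserProof.colorable_induce _ _ (KneserProof.colorable_kneser n hn)) ?_
    exact KneserProof.not_colorable_induce n (n - 2 - 1) (by omega) (by omega) S (le_of_eq hS)
end

section
/- For n ≥ 6, every critical subset X of the Kneser graph K = K(n,2) (i.e., a 3-element set X of vertices with χ(K - X) = n - 3) is an independent set in K. -/
lemma pair_eq {α : Type*} [DecidableEq α] {s : Finset α} {a b : α}
    (hs : s.card = 2) (ha : a ∈ s) (hb : b ∈ s) (hab : a ≠ b) : s = {a, b} := by
  symm
  apply Finset.eq_of_subset_of_card_le
  · intro x hx
    simp only [Finset.mem_insert, Finset.mem_singleton] at hx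
    rcases hx with rfl | rfl <;> assumption
  · rw [hs, Finset.card_insert_of_notMem (by simpa using hab), Finset.card_singleton]

lemma intersecting_classify {n : ℕ} (hn : 1 ≤ n)
    (F : Finset {s : Finset (Fin n) // s.card = 2})
    (hF : ∀ v ∈ F, ∀ w ∈ F, v ≠ w → ¬ Disjoint v.1 w.1) :
    (∃ x : Fin n, ∀ v ∈ F, x ∈ v.1) ∨
    (∃ T : Finset (Fin n), T.card ≤ 3 ∧ ∀ v ∈ F, v.1 ⊆ T) := by
  classical
  by_cases h : ∃ x : Fin n, ∀ v ∈ F, x ∈ v.1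
  · exact Or.inl h
  right
  push_neg at h
  obtain ⟨v, hvF, -⟩ := h ⟨0, hn⟩
  obtain ⟨a, b, hab, hvab⟩ := Finset.card_eq_two.mp v.2
  obtain ⟨w, hwF, hwa⟩ := h a
  have hvw : v ≠ w := fun e => hwa (e ▸ (hvab ▸ (Finset.mem_insert_self a {b}) : a ∈ v.1))
  have hbw : b ∈ w.1 := by
    have := hF v hvF w hwF hvw
    rw [Finset.not_disjoint_iff] at this
    obtain ⟨e, he1, he2⟩ := this
    rw [hvab] at he1
    simp only [Finset.mem_insert, Finset.mem_singleton] at he1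
    rcases he1 with rfl | rfl
    · exact absurd he2 hwa
    · exact he2
  obtain ⟨c, hcw, hbc⟩ : ∃ c ∈ w.1, c ≠ b := by
    obtain ⟨p, q, hpq, hw⟩ := Finset.card_eq_two.mp w.2
    rcases (by rw [hw] at hbw; simpa using hbw : b = p ∨ b = q) with rfl | rfl
    · exact ⟨q, by simp [hw], fun e => hpq e.symm⟩
    · exact ⟨p, by simp [hw], hpq⟩
  have hwbc : w.1 = {b, c} := pair_eq w.2 hbw hcw (Ne.symm hbc)
  have hca : c ≠ a := by rintro rfl; exact hwa hcw
  obtain ⟨u, huF, hub⟩ := h b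
  have hvu : v ≠ u := fun e => hub (e ▸ (by rw [hvab]; simp : b ∈ v.1))
  have hwu : w ≠ u := fun e => hub (e ▸ hbw)
  have hau : a ∈ u.1 := by
    have := hF v hvF u huF hvu
    rw [Finset.not_disjoint_iff] at this
    obtain ⟨e, he1, he2⟩ := this
    rw [hvab] at he1
    simp only [Finset.mem_insert, Finset.mem_singleton] at he1
    rcases he1 with rfl | rfl
    · exact he2
    · exact absurd he2 hub
  have hcu : c ∈ u.1 := by
    have := hF w hwF u huF hwu
    rw [Finset.not_disjoint_iff] at this
    obtain ⟨e, he1, he2⟩ := this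
    rw [hwbc] at he1
    simp only [Finset.mem_insert, Finset.mem_singleton] at he1
    rcases he1 with rfl | rfl
    · exact absurd he2 hub
    · exact he2
  have huac : u.1 = {a, c} := pair_eq u.2 hau hcu (Ne.symm hca)
  refine ⟨{a, b, c}, ?_, ?_⟩
  · apply le_trans (Finset.card_insert_le _ _)
    exact Nat.add_le_add_right (le_trans (Finset.card_insert_le _ _) (by simp)) 1
  intro z hzF
  by_cases hzv : z = v
  · subst hzv; rw [hvab]; intro x hx; simp at hx ⊢; tauto
  have := hF z hzF v hvF hzv
  rw [Finset.not_disjoint_iff] at this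
  obtain ⟨e, hez, hev⟩ := this
  rw [hvab] at hev
  simp only [Finset.mem_insert, Finset.mem_singleton] at hev
  rcases hev with rfl | rfl
  · have hzw : z ≠ w := fun h => hwa (h ▸ hez)
    have := hF z hzF w hwF hzw
    rw [Finset.not_disjoint_iff] at this
    obtain ⟨f, hfz, hfw⟩ := this
    have hef : e ≠ f := by rintro rfl; rw [hwbc] at hfw; simp at hfw; tauto
    have hz : z.1 = {e, f} := pair_eq z.2 hez hfz hef
    rw [hz]
    intro x hx
    simp only [Finset.mem_insert, Finset.mem_singleton] at hx ⊢
    rcases hx with rfl | rfl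
    · tauto
    · rw [hwbc] at hfw; simp at hfw; tauto
  · have hzu : z ≠ u := fun h => hub (h ▸ hez)
    have := hF z hzF u huF hzu
    rw [Finset.not_disjoint_iff] at this
    obtain ⟨f, hfz, hfu⟩ := this
    have hef : e ≠ f := by rintro rfl; rw [huac] at hfu; simp at hfu; tauto
    have hz : z.1 = {e, f} := pair_eq z.2 hez hfz hef
    rw [hz]
    intro x hx
    simp only [Finset.mem_insert, Finset.mem_singleton] at hx ⊢
    rcases hx with rfl | rfl
    · tauto
    · rw [huac] at hfu; simp at hfu; tauto


/-- For `n ≥ 6`, every critical subset `X` of `K(n,2)` (a set of 3 vertices whose deletion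
decreases the chromatic number to `n-3`) is an independent set. -/
theorem stmt_10 (n : ℕ) (hn : 6 ≤ n)
    (X : Finset {s : Finset (Fin n) // s.card = 2}) (hX : X.card = 3)
    (hcrit : ((kneser n).induce {v | v ∉ X}).chromaticNumber = ((n - 3 : ℕ) : ℕ∞)) :
    ∀ A ∈ X, ∀ B ∈ X, ¬ (kneser n).Adj A B := by
    classical
  intro A hA B hB hadj
  obtain ⟨hABne, hABdisj⟩ := hadj
  have hcol : ((kneser n).induce {v | v ∉ X}).Colorable (n-3) := by
    rw [← SimpleGraph.chromaticNumber_le_iff_colorable, hcrit]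
  obtain ⟨C⟩ := hcol
  let col : {s : Finset (Fin n) // s.card = 2} → Fin (n-3) :=
    fun v => if h : v ∈ X then ⟨0, by omega⟩ else C ⟨v, h⟩
  have hvalid : ∀ v w : {s : Finset (Fin n) // s.card = 2}, v ∉ X → w ∉ X → v ≠ w →
      Disjoint v.1 w.1 → col v ≠ col w := by
    intro v w hv hw hne hd
    simp only [col, dif_neg hv, dif_neg hw]
    exact C.valid (show ((kneser n).induce _).Adj ⟨v,hv⟩ ⟨w,hw⟩ from ⟨by simpa using hne, hd⟩)
  let F : Fin (n-3) → Finset {s : Finset (Fin n) // s.card = 2} :=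
    fun i => Finset.univ.filter (fun v => v ∉ X ∧ col v = i)
  have hFint : ∀ i, ∀ v ∈ F i, ∀ w ∈ F i, v ≠ w → ¬ Disjoint v.1 w.1 := by
    intro i v hv w hw hne hd
    simp only [F, Finset.mem_filter] at hv hw
    exact hvalid v w hv.2.1 hw.2.1 hne hd (hv.2.2.trans hw.2.2.symm)
  have H : ∀ i : Fin (n-3), ∃ (o : Option (Fin n)) (T : Finset (Fin n)),
      (∀ x, o = some x → ∀ v ∈ F i, x ∈ v.1) ∧
      (o = none → T.card ≤ 3 ∧ ∀ v ∈ F i, v.1 ⊆ T) := by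
    intro i
    rcases intersecting_classify (by omega) (F i) (hFint i) with ⟨x, hx⟩ | ⟨T, hT⟩
    · exact ⟨some x, ∅, fun y hy => by cases hy; exact hx, by simp⟩
    · exact ⟨none, T, by simp, fun _ => hT⟩
  choose o T ho hT using H
  let d0 : Fin n := ⟨0, by omega⟩
  let S : Finset (Fin (n-3)) := Finset.univ.filter (fun i => (o i).isSome)
  let Ct : Finset (Fin (n-3)) := Finset.univ.filter (fun i => ¬ (o i).isSome)
  have hsplit : S.card + Ct.card = n - 3 := by
    rw [Finset.card_filter_add_card_filter_not, Finset.card_univ, Fintype.card_fin]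
  have hSle : S.card ≤ n - 3 := by omega
  let P : Finset (Fin n) := S.image (fun i => (o i).getD d0)
  have hPS : P.card ≤ S.card := Finset.card_image_le
  let R : Finset (Fin n) := Finset.univ \ P
  have hPn : P.card ≤ n := le_trans (Finset.card_le_univ P) (by simp)
  have hmn : R.card + P.card = n := by
    rw [Finset.card_sdiff_of_subset (Finset.subset_univ P), Finset.card_univ, Fintype.card_fin]
    omega
  have htm : Ct.card + 3 ≤ R.card := by omega
  let XI : Finset (Finset (Fin n)) := X.image (fun v => v.1)
  have hXI : XI.card ≤ 3 := le_trans Finset.card_image_le (le_of_eq hX)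
  have hcover : R.powersetCard 2 ⊆
      (Ct.biUnion (fun i => (T i ∩ R).powersetCard 2)) ∪ XI := by
    intro s hs
    rw [Finset.mem_powersetCard] at hs
    obtain ⟨hsR, hs2⟩ := hs
    by_cases hsX : (⟨s, hs2⟩ : {s : Finset (Fin n) // s.card = 2}) ∈ X
    · exact Finset.mem_union_right _ (Finset.mem_image.mpr ⟨_, hsX, rfl⟩)
    · have hmem : (⟨s, hs2⟩ : {s : Finset (Fin n) // s.card = 2}) ∈ F (col ⟨s, hs2⟩) := by
        simp [F, hsX]
      set i := col (⟨s, hs2⟩ : {s : Finset (Fin n) // s.card = 2}) with hi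
      match hoi : o i with
      | some x =>
        exfalso
        have hx : x ∈ s := ho i x hoi _ hmem
        have hxP : x ∈ P := Finset.mem_image.mpr ⟨i, by simp [S, hoi], by simp [hoi]⟩
        have := hsR hx
        simp only [R, Finset.mem_sdiff] at this
        exact this.2 hxP
      | none =>
        obtain ⟨hT3, hsub⟩ := hT i hoi
        refine Finset.mem_union_left _ (Finset.mem_biUnion.mpr ⟨i, ?_, ?_⟩)
        · simp [Ct, hoi]
        · rw [Finset.mem_powersetCard]
          exact ⟨Finset.subset_inter (hsub _ hmem) hsR, hs2⟩
  have hTcard : ∀ i ∈ Ct, ((T i ∩ R).powersetCard 2).card ≤ 3 := by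
    intro i hi
    have hnone : o i = none := by
      simp only [Ct, Finset.mem_filter] at hi
      exact Option.not_isSome_iff_eq_none.mp hi.2
    have h3 : (T i ∩ R).card ≤ 3 :=
      le_trans (Finset.card_le_card (Finset.inter_subset_left)) (hT i hnone).1
    rw [Finset.card_powersetCard]
    exact le_trans (Nat.choose_le_choose 2 h3) (by decide)
  have hcard2 : Nat.choose R.card 2 ≤ 3 * Ct.card + 3 := by
    calc Nat.choose R.card 2 = (R.powersetCard 2).card := by rw [Finset.card_powersetCard]
    _ ≤ ((Ct.biUnion (fun i => (T i ∩ R).powersetCard 2)) ∪ XI).card :=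
        Finset.card_le_card hcover
    _ ≤ (Ct.biUnion (fun i => (T i ∩ R).powersetCard 2)).card + XI.card :=
        Finset.card_union_le _ _
    _ ≤ (∑ i ∈ Ct, ((T i ∩ R).powersetCard 2).card) + 3 :=
        add_le_add (Finset.card_biUnion_le) hXI
    _ ≤ Ct.card * 3 + 3 := Nat.add_le_add_right (Finset.sum_le_card_nsmul _ _ 3 hTcard) 3
    _ = 3 * Ct.card + 3 := by ring
  have hm4 : R.card ≤ 4 := by
    by_contra hge
    push_neg at hge
    obtain ⟨m', hm'⟩ : ∃ m', R.card = m' + 5 := ⟨R.card - 5, by omega⟩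
    rw [hm'] at hcard2 htm
    have heven : 2 ∣ (m' + 5) * (m' + 4) := by
      have := Nat.even_mul_succ_self (m' + 4)
      exact (by rwa [mul_comm] at this : Even ((m' + 5) * (m' + 4))).two_dvd
    have h2 : (m' + 5) * (m' + 4) = Nat.choose (m' + 5) 2 * 2 := by
      rw [Nat.choose_two_right]
      have h4 : m' + 5 - 1 = m' + 4 := rfl
      rw [h4, Nat.div_mul_cancel heven]
    nlinarith [hcard2, htm]
  have hm34 : R.card = 3 ∨ R.card = 4 := by omega
  rcases hm34 with hm | hm
  · -- m = 3 : Ct empty, pairs of R all in XI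
    have ht0 : Ct = ∅ := Finset.card_eq_zero.mp (by omega)
    rw [ht0] at hcover
    simp only [Finset.biUnion_empty, Finset.empty_union] at hcover
    have hPR3 : (R.powersetCard 2).card = 3 := by
      rw [Finset.card_powersetCard, hm]; decide
    have heq : R.powersetCard 2 = XI :=
      Finset.eq_of_subset_of_card_le hcover (by omega)
    have hAR : A.1 ⊆ R := by
      have : A.1 ∈ XI := Finset.mem_image.mpr ⟨A, hA, rfl⟩
      rw [← heq, Finset.mem_powersetCard] at this
      exact this.1
    have hBR : B.1 ⊆ R := by
      have : B.1 ∈ XI := Finset.mem_image.mpr ⟨B, hB, rfl⟩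
      rw [← heq, Finset.mem_powersetCard] at this
      exact this.1
    have hcup : (A.1 ∪ B.1).card = 4 := by
      rw [Finset.card_union_of_disjoint hABdisj, A.2, B.2]
    have := Finset.card_le_card (Finset.union_subset hAR hBR)
    omega
  · -- m = 4 : one triangle
    have ht1 : Ct.card = 1 := by
      have h6 : Nat.choose R.card 2 = 6 := by rw [hm]; decide
      omega
    obtain ⟨i0, hi0⟩ := Finset.card_eq_one.mp ht1
    have hi0Ct : i0 ∈ Ct := hi0 ▸ Finset.mem_singleton_self i0
    have hnone : o i0 = none := by
      simp only [Ct, Finset.mem_filter] at hi0Ct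
      exact Option.not_isSome_iff_eq_none.mp hi0Ct.2
    rw [hi0] at hcover
    rw [Finset.singleton_biUnion] at hcover
    set Q : Finset (Finset (Fin n)) := (T i0 ∩ R).powersetCard 2 with hQdef
    have hk3 : (T i0 ∩ R).card ≤ 3 :=
      le_trans (Finset.card_le_card (Finset.inter_subset_left)) (hT i0 hnone).1
    have hQcard : Q.card = Nat.choose (T i0 ∩ R).card 2 := Finset.card_powersetCard 2 _
    have hPR6 : (R.powersetCard 2).card = 6 := by
      rw [Finset.card_powersetCard, hm]; decide
    have h6le : 6 ≤ Q.card + 3 := by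
      have h1 := Finset.card_le_card hcover
      have h2 := Finset.card_union_le Q XI
      omega
    have haux : ∀ k, k ≤ 3 → 3 ≤ Nat.choose k 2 → k = 3 := by decide
    have hkeq : (T i0 ∩ R).card = 3 := haux _ hk3 (by omega)
    have hQ3 : Q.card = 3 := by rw [hQcard, hkeq]; decide
    have heq : R.powersetCard 2 = Q ∪ XI := by
      apply Finset.eq_of_subset_of_card_le hcover
      have := Finset.card_union_le Q XI
      omega
    have hdisjQX : (Q ∩ XI).card = 0 := by
      have := Finset.card_union_add_card_inter Q XI
      rw [← heq] at this
      omega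
    have hXI3 : XI.card = 3 := by
      have := Finset.card_union_add_card_inter Q XI
      rw [← heq] at this
      omega
    have hTR : T i0 ∩ R ⊆ R := Finset.inter_subset_right
    have hd1 : (R \ (T i0 ∩ R)).card = 1 := by
      rw [Finset.card_sdiff_of_subset hTR, hkeq, hm]
    have key : ∀ v : {s : Finset (Fin n) // s.card = 2}, v ∈ X →
        ∃ a ∈ v.1, a ∈ R \ (T i0 ∩ R) := by
      intro v hv
      have hvXI : v.1 ∈ XI := Finset.mem_image.mpr ⟨v, hv, rfl⟩
      have hvPR : v.1 ∈ R.powersetCard 2 := by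
        rw [heq]; exact Finset.mem_union_right _ hvXI
      rw [Finset.mem_powersetCard] at hvPR
      have hvQ : v.1 ∉ Q := by
        intro hq
        have : v.1 ∈ Q ∩ XI := Finset.mem_inter.mpr ⟨hq, hvXI⟩
        rw [Finset.card_eq_zero.mp hdisjQX] at this
        exact absurd this (Finset.notMem_empty _)
      have : ¬ v.1 ⊆ T i0 ∩ R := by
        intro hsub
        exact hvQ (Finset.mem_powersetCard.mpr ⟨hsub, v.2⟩)
      obtain ⟨a, ha1, ha2⟩ := Finset.not_subset.mp this
      exact ⟨a, ha1, Finset.mem_sdiff.mpr ⟨hvPR.1 ha1, ha2⟩⟩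
    obtain ⟨a, haA, haD⟩ := key A hA
    obtain ⟨b, hbB, hbD⟩ := key B hB
    have hab : a = b := Finset.card_le_one.mp (le_of_eq hd1) a haD b hbD
    exact Finset.disjoint_left.mp hABdisj haA (hab ▸ hbB)
end

section
/- Let k ≥ 2 and let F = M_k + (P₄ ∪ M_{k-2}) be the join of a matching of size k with the disjoint union of a path on 4 vertices and a matching of size k-2. Then χ(F) = 4, F is color-k-critical, and removing the k edges of the first matching M_k decreases the chromatic number to 3. -/
open SimpleGraph

/-- The join `G + H` of two graphs: their disjoint union together with all edges between them. -/
def joinG {α β : Type*} (G : SimpleGraph α) (H : SimpleGraph β) : SimpleGraph (α ⊕ β) where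
  Adj u v := match u, v with
    | Sum.inl a, Sum.inl b => G.Adj a b
    | Sum.inr a, Sum.inr b => H.Adj a b
    | _, _ => True
  symm := by
    constructor
    intro u v h
    cases u <;> cases v <;> first | exact G.adj_symm h | exact H.adj_symm h | trivial
  loopless := by
    constructor
    intro u
    cases u with
    | inl a => exact G.irrefl
    | inr a => exact H.irrefl

/-- The matching `M_k` with `k` edges, realised on `Fin k × Fin 2`. -/
def matchingGraph (k : ℕ) : SimpleGraph (Fin k × Fin 2) where
  Adj u v := u.1 = v.1 ∧ u.2 ≠ v.2
  symm := ⟨fun _ _ h => ⟨h.1.symm, h.2.symm⟩⟩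
  loopless := ⟨fun _ h => h.2 rfl⟩


lemma chrom_le_of_hom {V W : Type*} {G : SimpleGraph V} {G' : SimpleGraph W} (f : G →g G') :
    G.chromaticNumber ≤ G'.chromaticNumber :=
  chromaticNumber_le_of_forall_imp fun _ h => h.elim fun C => ⟨C.comp f⟩

lemma four_le_chrom {V : Type*} {G : SimpleGraph V} {a b c d : V}
    (hab : G.Adj a b) (hac : G.Adj a c) (had : G.Adj a d)
    (hbc : G.Adj b c) (hbd : G.Adj b d) (hcd : G.Adj c d) :
    (4 : ℕ∞) ≤ G.chromaticNumber := by
  have f : (⊤ : SimpleGraph (Fin 4)) →g G := by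
    refine ⟨![a, b, c, d], ?_⟩
    intro i j hij
    fin_cases i <;> fin_cases j <;> simp_all <;> solve_by_elim [SimpleGraph.Adj.symm]
  have h := chrom_le_of_hom f
  rw [chromaticNumber_top, Fintype.card_fin] at h
  exact_mod_cast h

lemma three_le_chrom {V : Type*} {G : SimpleGraph V} {a b c : V}
    (hab : G.Adj a b) (hac : G.Adj a c) (hbc : G.Adj b c) :
    (3 : ℕ∞) ≤ G.chromaticNumber := by
  have f : (⊤ : SimpleGraph (Fin 3)) →g G := by
    refine ⟨![a, b, c], ?_⟩
    intro i j hij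
    fin_cases i <;> fin_cases j <;> simp_all <;> solve_by_elim [SimpleGraph.Adj.symm]
  have h := chrom_le_of_hom f
  rw [chromaticNumber_top, Fintype.card_fin] at h
  exact_mod_cast h

/-- Pair index used for the pigeonhole argument. -/
def critIndex (k : ℕ) : (Fin k × Fin 2) ⊕ (Fin 4 ⊕ Fin (k-2) × Fin 2) → ℕ ⊕ ℕ
  | Sum.inl (a, _) => Sum.inl a.val
  | Sum.inr (Sum.inl p) => Sum.inr (p.val / 2)
  | Sum.inr (Sum.inr (a, _)) => Sum.inr (a.val + 2)

/-- For `k ≥ 2`, the graph `F = M_k + (P₄ ∪ M_{k-2})` has chromatic number 4, removing the `k`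
edges of the join part `M_k` decreases the chromatic number to 3, and deleting any `k-1`
vertices does not decrease the chromatic number; so `F` is color-`k`-critical. -/
theorem stmt_14 (k : ℕ) (hk : 2 ≤ k) :
    ∀ F : SimpleGraph ((Fin k × Fin 2) ⊕ (Fin 4 ⊕ Fin (k - 2) × Fin 2)),
    F = joinG (matchingGraph k) ((pathGraph 4) ⊕g matchingGraph (k - 2)) →
    ∀ EA : Finset (Sym2 ((Fin k × Fin 2) ⊕ (Fin 4 ⊕ Fin (k - 2) × Fin 2))),
    EA = (Finset.univ : Finset (Fin k)).image
      (fun a => s(Sum.inl (a, (0 : Fin 2)), Sum.inl (a, (1 : Fin 2)))) →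
    F.chromaticNumber = (4 : ℕ∞) ∧
    EA.card = k ∧ ↑EA ⊆ F.edgeSet ∧
    (F.deleteEdges ↑EA).chromaticNumber = (3 : ℕ∞) ∧
    (∀ S : Finset ((Fin k × Fin 2) ⊕ (Fin 4 ⊕ Fin (k - 2) × Fin 2)), S.card = k - 1 →
      F.chromaticNumber ≤ (F.induce {v | v ∉ S}).chromaticNumber) := by

  intro F hF EA hEA
  subst hF hEA
  have hk0 : 0 < k := by omega
  set G := joinG (matchingGraph k) ((pathGraph 4) ⊕g matchingGraph (k - 2)) with hG
  set EA := (Finset.univ : Finset (Fin k)).image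
      (fun a => (s(Sum.inl (a, (0 : Fin 2)), Sum.inl (a, (1 : Fin 2)))
        : Sym2 ((Fin k × Fin 2) ⊕ (Fin 4 ⊕ Fin (k - 2) × Fin 2)))) with hEA
  -- basic adjacency facts
  have hadjLL : ∀ (a b : Fin k) (i j : Fin 2),
      G.Adj (Sum.inl (a,i)) (Sum.inl (b,j)) ↔ (a = b ∧ i ≠ j) := fun a b i j => Iff.rfl
  have hadjLR : ∀ (x : Fin k × Fin 2) (y : Fin 4 ⊕ Fin (k-2) × Fin 2),
      G.Adj (Sum.inl x) (Sum.inr y) := by intro x y; trivial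
  have hadjRR : ∀ (x y : Fin 4 ⊕ Fin (k-2) × Fin 2),
      G.Adj (Sum.inr x) (Sum.inr y) ↔ ((pathGraph 4) ⊕g matchingGraph (k - 2)).Adj x y :=
    fun x y => Iff.rfl
  -- P4 edges
  have hP : ∀ p q : Fin 4, p.val + 1 = q.val →
      ((pathGraph 4) ⊕g matchingGraph (k - 2)).Adj (Sum.inl p) (Sum.inl q) := by
    intro p q h
    show (pathGraph 4).Adj p q
    rw [pathGraph_adj]; left; exact h
  have hM01 : (0 : Fin 2) ≠ 1 := by decide
  -- the K4 lower bound for G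
  have h4le : (4 : ℕ∞) ≤ G.chromaticNumber := by
    refine four_le_chrom (a := Sum.inl (⟨0,hk0⟩, 0)) (b := Sum.inl (⟨0,hk0⟩, 1))
      (c := Sum.inr (Sum.inl 0)) (d := Sum.inr (Sum.inl 1))
      ((hadjLL _ _ _ _).2 ⟨rfl, hM01⟩) (hadjLR _ _) (hadjLR _ _) (hadjLR _ _) (hadjLR _ _)
      ((hadjRR _ _).2 (hP 0 1 rfl))
  -- 4-coloring of G
  have hcol4 : G.Colorable 4 := by
    refine ⟨Coloring.mk (fun v => match v with
      | Sum.inl (_, i) => (⟨i.val, by omega⟩ : Fin 4)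
      | Sum.inr (Sum.inl p) => ⟨2 + p.val % 2, by omega⟩
      | Sum.inr (Sum.inr (_, i)) => ⟨2 + i.val, by omega⟩) ?_⟩
    rintro (⟨a, i⟩ | (p | ⟨a, i⟩)) (⟨b, j⟩ | (q | ⟨b, j⟩)) h <;>
      simp only [ne_eq, Fin.mk.injEq]
    · obtain ⟨h1, h2⟩ := (hadjLL a b i j).1 h
      exact fun hc => h2 (Fin.ext hc)
    · omega
    · omega
    · omega
    · have h' : (pathGraph 4).Adj p q := h
      rw [pathGraph_adj] at h'
      omega
    · exact Bool.noConfusion (h : false = true)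
    · omega
    · exact Bool.noConfusion (h : false = true)
    · obtain ⟨h1, h2⟩ : (matchingGraph (k-2)).Adj (a,i) (b,j) := h
      intro hc
      have hij : i = j := Fin.ext (by omega)
      exact h2 hij
  have hchi4 : G.chromaticNumber = (4 : ℕ∞) := by
    refine le_antisymm ?_ h4le
    exact_mod_cast hcol4.chromaticNumber_le
  refine ⟨hchi4, ?_, ?_, ?_, ?_⟩
  · -- card
    rw [hEA, Finset.card_image_of_injective _ ?_, Finset.card_univ, Fintype.card_fin]
    intro a b hab
    simp only [Sym2.eq, Sym2.rel_iff', Prod.mk.injEq, Sum.inl.injEq, Prod.mk.injEq] at hab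
    rcases hab with ⟨⟨h1, -⟩, -⟩ | h2
    · exact h1
    · rw [Prod.ext_iff] at h2
      simp only [Prod.swap_prod_mk, Sum.inl.injEq, Prod.mk.injEq] at h2
      exact absurd h2.1.2 (by decide)
  · -- subset of edgeSet
    intro e he
    simp only [Finset.coe_image, Set.mem_image, Finset.mem_coe, hEA] at he
    obtain ⟨a, _, rfl⟩ := he
    exact (hadjLL a a 0 1).2 ⟨rfl, hM01⟩
  · -- chromatic number after deleting EA
    have hnotEA_LR : ∀ (x : Fin k × Fin 2) (y : Fin 4 ⊕ Fin (k-2) × Fin 2),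
        s(Sum.inl x, Sum.inr y) ∉ (↑EA : Set (Sym2 ((Fin k × Fin 2) ⊕ (Fin 4 ⊕ Fin (k - 2) × Fin 2)))) := by
      intro x y hmem
      simp only [hEA, Finset.coe_image, Set.mem_image, Finset.mem_coe] at hmem
      obtain ⟨a, -, ha⟩ := hmem
      rw [Sym2.eq_iff] at ha
      rcases ha with ⟨-, h⟩ | ⟨h, -⟩ <;> exact Sum.inl_ne_inr h
    have hnotEA_RR : ∀ (x y : Fin 4 ⊕ Fin (k-2) × Fin 2),
        s(Sum.inr x, Sum.inr y) ∉ (↑EA : Set (Sym2 ((Fin k × Fin 2) ⊕ (Fin 4 ⊕ Fin (k - 2) × Fin 2)))) := by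
      intro x y hmem
      simp only [hEA, Finset.coe_image, Set.mem_image, Finset.mem_coe] at hmem
      obtain ⟨a, -, ha⟩ := hmem
      rw [Sym2.eq_iff] at ha
      rcases ha with ⟨h, -⟩ | ⟨-, h⟩ <;> exact Sum.inl_ne_inr h
    have h3le : (3 : ℕ∞) ≤ (G.deleteEdges ↑EA).chromaticNumber := by
      refine three_le_chrom (a := Sum.inl (⟨0,hk0⟩, 0)) (b := Sum.inr (Sum.inl 0))
        (c := Sum.inr (Sum.inl 1)) ?_ ?_ ?_ <;> rw [deleteEdges_adj]
      · exact ⟨hadjLR _ _, hnotEA_LR _ _⟩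
      · exact ⟨hadjLR _ _, hnotEA_LR _ _⟩
      · exact ⟨(hadjRR _ _).2 (hP 0 1 rfl), hnotEA_RR _ _⟩
    have hcol3 : (G.deleteEdges ↑EA).Colorable 3 := by
      refine ⟨Coloring.mk (fun v => match v with
        | Sum.inl _ => (0 : Fin 3)
        | Sum.inr (Sum.inl p) => ⟨1 + p.val % 2, by omega⟩
        | Sum.inr (Sum.inr (_, i)) => ⟨1 + i.val, by omega⟩) ?_⟩
      rintro (⟨a, i⟩ | (p | ⟨a, i⟩)) (⟨b, j⟩ | (q | ⟨b, j⟩)) h <;>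
        rw [deleteEdges_adj] at h <;>
        simp only [ne_eq, Fin.mk.injEq]
      · obtain ⟨heq, hij⟩ := (hadjLL a b i j).1 h.1
        subst heq
        exfalso
        apply h.2
        simp only [hEA, Finset.coe_image, Set.mem_image, Finset.mem_coe]
        refine ⟨a, by simp, ?_⟩
        fin_cases i <;> fin_cases j
        · exact absurd rfl hij
        · rfl
        · exact Sym2.eq_swap
        · exact absurd rfl hij
      · intro hc
        exact absurd hc.symm (by simp [Fin.ext_iff])
      · intro hc
        have h' : (0:ℕ) = 1 + j.val := congrArg Fin.val hc
        omega
      · intro hc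
        exact absurd hc (by simp [Fin.ext_iff])
      · have h' : (pathGraph 4).Adj p q := h.1
        rw [pathGraph_adj] at h'
        omega
      · exact Bool.noConfusion (h.1 : false = true)
      · intro hc
        have h' : 1 + i.val = (0:ℕ) := congrArg Fin.val hc
        omega
      · exact Bool.noConfusion (h.1 : false = true)
      · obtain ⟨h1, h2⟩ : (matchingGraph (k-2)).Adj (a,i) (b,j) := h.1
        fin_cases i <;> fin_cases j <;> first | exact absurd rfl h2 | decide
    refine le_antisymm ?_ h3le
    exact_mod_cast hcol3.chromaticNumber_le
  · -- criticality
    intro S hS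
    rw [hchi4]
    classical
    set T := S.image (critIndex k) with hT
    have hTcard : T.card < k :=
      lt_of_le_of_lt (le_trans Finset.card_image_le (le_of_eq hS)) (by omega)
    have hmemT : ∀ v ∈ S, critIndex k v ∈ T := fun v hv => Finset.mem_image_of_mem _ hv
    have hexL : ∃ a : Fin k, (Sum.inl a.val : ℕ ⊕ ℕ) ∉ T := by
      by_contra hcon
      push_neg at hcon
      have hsub : (Finset.univ.image (fun x : Fin k => (Sum.inl x.val : ℕ ⊕ ℕ))) ⊆ T := by
        intro x hx
        obtain ⟨a, -, rfl⟩ := Finset.mem_image.1 hx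
        exact hcon a
      have hcard := Finset.card_le_card hsub
      rw [Finset.card_image_of_injective _
        (fun x y h => Fin.val_injective (Sum.inl_injective h)),
        Finset.card_univ, Fintype.card_fin] at hcard
      omega
    have hexR : ∃ b : Fin k, (Sum.inr b.val : ℕ ⊕ ℕ) ∉ T := by
      by_contra hcon
      push_neg at hcon
      have hsub : (Finset.univ.image (fun x : Fin k => (Sum.inr x.val : ℕ ⊕ ℕ))) ⊆ T := by
        intro x hx
        obtain ⟨a, -, rfl⟩ := Finset.mem_image.1 hx
        exact hcon a
      have hcard := Finset.card_le_card hsub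
      rw [Finset.card_image_of_injective _
        (fun x y h => Fin.val_injective (Sum.inr_injective h)),
        Finset.card_univ, Fintype.card_fin] at hcard
      omega
    obtain ⟨a, ha⟩ := hexL
    obtain ⟨b, hb⟩ := hexR
    have ha0 : Sum.inl (a, (0:Fin 2)) ∉ S := fun h => ha (hmemT _ h)
    have ha1 : Sum.inl (a, (1:Fin 2)) ∉ S := fun h => ha (hmemT _ h)
    have hbS : ∀ v ∈ S, critIndex k v ≠ Sum.inr b.val := fun v hv heq => hb (heq ▸ hmemT v hv)
    obtain ⟨c, d, hcd, hc, hd⟩ :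
        ∃ c d : Fin 4 ⊕ Fin (k-2) × Fin 2,
          ((pathGraph 4) ⊕g matchingGraph (k - 2)).Adj c d ∧
            Sum.inr c ∉ S ∧ Sum.inr d ∉ S := by
      rcases (show b.val = 0 ∨ b.val = 1 ∨ 2 ≤ b.val by omega) with hb0 | hb1 | hb2
      · refine ⟨Sum.inl 0, Sum.inl 1, hP 0 1 rfl, ?_, ?_⟩
        · intro hmem
          refine hbS _ hmem ?_
          show Sum.inr ((0 : Fin 4).val / 2) = Sum.inr b.val
          rw [show (0 : Fin 4).val = 0 from rfl, hb0]
        · intro hmem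
          refine hbS _ hmem ?_
          show Sum.inr ((1 : Fin 4).val / 2) = Sum.inr b.val
          rw [show (1 : Fin 4).val = 1 from rfl, hb0]
      · refine ⟨Sum.inl 2, Sum.inl 3, hP 2 3 rfl, ?_, ?_⟩
        · intro hmem
          refine hbS _ hmem ?_
          show Sum.inr ((2 : Fin 4).val / 2) = Sum.inr b.val
          rw [show (2 : Fin 4).val = 2 from rfl, hb1]
        · intro hmem
          refine hbS _ hmem ?_
          show Sum.inr ((3 : Fin 4).val / 2) = Sum.inr b.val
          rw [show (3 : Fin 4).val = 3 from rfl, hb1]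
      · refine ⟨Sum.inr (⟨b.val - 2, by omega⟩, 0), Sum.inr (⟨b.val - 2, by omega⟩, 1),
          ?_, ?_, ?_⟩
        · show (matchingGraph (k-2)).Adj _ _
          exact ⟨rfl, hM01⟩
        · intro hmem
          refine hbS _ hmem ?_
          show (Sum.inr (b.val - 2 + 2) : ℕ ⊕ ℕ) = Sum.inr b.val
          congr 1
          omega
        · intro hmem
          refine hbS _ hmem ?_
          show (Sum.inr (b.val - 2 + 2) : ℕ ⊕ ℕ) = Sum.inr b.val
          congr 1
          omega
    refine four_le_chrom
      (a := (⟨Sum.inl (a, 0), ha0⟩ : {v | v ∉ S})) (b := ⟨Sum.inl (a, 1), ha1⟩)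
      (c := ⟨Sum.inr c, hc⟩) (d := ⟨Sum.inr d, hd⟩) ?_ ?_ ?_ ?_ ?_ ?_
    · exact (hadjLL a a 0 1).2 ⟨rfl, hM01⟩
    · exact hadjLR (a, 0) c
    · exact hadjLR (a, 0) d
    · exact hadjLR (a, 1) c
    · exact hadjLR (a, 1) d
    · exact (hadjRR c d).2 hcd
end
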